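/- arXiv:2207.04605 — 7 statements merged into one kernel-verified Lean document; each statement's English description precedes it below -/
import Mathlib

section
/- Under Assumption 1, let ε ∈ {1, −1} be the constant value of n_y(f) on R and let g : R → I be the unique continuous function with f(x, g(x)) = 0 on R. Then for every compact subrectangle R′ ⊆ R, ∬_{R′×I} Θ_y f(x,y) dx dy = ((ε+1)/2)·|R′|·M₀ + ((ε−1)/2)·|R′|·m₀ − ε·∫_{R′} g(x) dx, where |R′| denotes the Lebesgue measure of R′. -/
open Set MeasureTheory

/-- Under Assumption 1, with `ε ∈ {1, -1}` the constant value of `n_y(f)`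
on `R` and `g : R → I` the unique continuous implicit function, for every compact
subrectangle `R' ⊆ R`,
`∬_{R'×I} Θ_y f = ((ε+1)/2)·|R'|·M₀ + ((ε−1)/2)·|R'|·m₀ − ε·∫_{R'} g`. -/
theorem statement2 (n : ℕ) (f : (Fin n → ℝ) → ℝ → ℝ)
    (hf : Continuous fun p : (Fin n → ℝ) × ℝ => f p.1 p.2)
    (ξ η : Fin n → ℝ) (hξη : ∀ k, ξ k ≤ η k)
    (m₀ M₀ : ℝ) (hI : m₀ ≤ M₀)
    (y₀ : (Fin n → ℝ) → ℝ)
    (hA : ∀ x ∈ Icc ξ η, y₀ x ∈ Icc m₀ M₀)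
    (ε : ℝ)
    (hε : (ε = 1 ∧ ∀ x ∈ Icc ξ η,
            (∀ y ∈ Icc m₀ M₀, y < y₀ x → f x y < 0) ∧ (∀ y ∈ Icc m₀ M₀, y₀ x < y → 0 < f x y)) ∨
          (ε = -1 ∧ ∀ x ∈ Icc ξ η,
            (∀ y ∈ Icc m₀ M₀, y < y₀ x → 0 < f x y) ∧ (∀ y ∈ Icc m₀ M₀, y₀ x < y → f x y < 0)))
    (g : (Fin n → ℝ) → ℝ)
    (hgc : ContinuousOn g (Icc ξ η))
    (hg : ∀ x ∈ Icc ξ η, g x ∈ Icc m₀ M₀ ∧ f x (g x) = 0)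
    (hguniq : ∀ x ∈ Icc ξ η, ∀ y ∈ Icc m₀ M₀, f x y = 0 → y = g x)
    (ξ' η' : Fin n → ℝ) (hsub : Icc ξ' η' ⊆ Icc ξ η) :
    ∫ p in Icc ξ' η' ×ˢ Icc m₀ M₀, (if 0 ≤ f p.1 p.2 then (1 : ℝ) else 0) =
      (ε + 1) / 2 * (volume (Icc ξ' η')).toReal * M₀ +
        (ε - 1) / 2 * (volume (Icc ξ' η')).toReal * m₀ -
        ε * ∫ x in Icc ξ' η', g x := by
  have hsm : MeasurableSet (Icc ξ' η') := measurableSet_Icc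
  have hA' : MeasurableSet {p : (Fin n → ℝ) × ℝ | 0 ≤ f p.1 p.2} :=
    (isClosed_le continuous_const hf).measurableSet
  have hfin : volume (Icc ξ' η' ×ˢ Icc m₀ M₀) < ⊤ :=
    (isCompact_Icc.prod isCompact_Icc).measure_lt_top
  have hvfin : volume (Icc ξ' η') < ⊤ := isCompact_Icc.measure_lt_top
  have hite : (fun p : (Fin n → ℝ) × ℝ => if 0 ≤ f p.1 p.2 then (1:ℝ) else 0)
      = Set.indicator {p : (Fin n → ℝ) × ℝ | 0 ≤ f p.1 p.2} (fun _ => 1) := by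
    funext p; simp [Set.indicator_apply]
  have hint : IntegrableOn (fun p : (Fin n → ℝ) × ℝ =>
      if 0 ≤ f p.1 p.2 then (1:ℝ) else 0) (Icc ξ' η' ×ˢ Icc m₀ M₀) volume := by
    rw [hite]
    exact (integrableOn_const hfin.ne).indicator hA'
  have hgint : IntegrableOn g (Icc ξ' η') :=
    (hgc.mono hsub).integrableOn_compact isCompact_Icc
  have hcint : IntegrableOn (fun _ : Fin n → ℝ => (1:ℝ)) (Icc ξ' η') :=
    integrableOn_const hvfin.ne
  rw [MeasureTheory.Measure.volume_eq_prod] at hint ⊢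
  rw [MeasureTheory.setIntegral_prod _ hint]
  rcases hε with ⟨hε1, hsign⟩ | ⟨hε1, hsign⟩
  · -- ε = 1 : f < 0 below, > 0 above
    have key : ∀ x ∈ Icc ξ' η', ∀ y ∈ Icc m₀ M₀, (0 ≤ f x y ↔ g x ≤ y) := by
      intro x hx y hy
      have hx' := hsub hx
      obtain ⟨hneg, hpos⟩ := hsign x hx'
      obtain ⟨hgmem, hg0⟩ := hg x hx'
      have hy0 : y₀ x = g x := by
        rcases lt_trichotomy (y₀ x) (g x) with h1 | h1 | h1
        · have := hpos (g x) hgmem h1; linarith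
        · exact h1
        · have := hneg (g x) hgmem h1; linarith
      constructor
      · intro h0
        by_contra hlt
        push_neg at hlt
        exact absurd h0 (not_le.mpr (hneg y hy (by rw [hy0]; exact hlt)))
      · intro hge
        rcases eq_or_lt_of_le hge with he | hlt
        · rw [← he]; exact le_of_eq hg0.symm
        · exact le_of_lt (hpos y hy (by rw [hy0]; exact hlt))
    have inner : ∀ x ∈ Icc ξ' η',
        (∫ y in Icc m₀ M₀, (if 0 ≤ f x y then (1:ℝ) else 0)) = M₀ - g x := by
      intro x hx
      obtain ⟨hgmem, _⟩ := hg x (hsub hx)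
      have h1 : (fun y => if 0 ≤ f x y then (1:ℝ) else 0)
          = Set.indicator {y | 0 ≤ f x y} (fun _ => 1) := by
        funext y; simp [Set.indicator_apply]
      have hmy : MeasurableSet {y : ℝ | 0 ≤ f x y} :=
        (isClosed_le continuous_const (hf.comp (Continuous.prodMk_right x))).measurableSet
      rw [h1, setIntegral_indicator hmy]
      have hseteq : Icc m₀ M₀ ∩ {y : ℝ | 0 ≤ f x y} = Icc (g x) M₀ := by
        ext y
        simp only [mem_inter_iff, mem_Icc, mem_setOf_eq]
        constructor
        · rintro ⟨hy, h0⟩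
          exact ⟨(key x hx y hy).mp h0, hy.2⟩
        · rintro ⟨h1', h2'⟩
          have hy : y ∈ Icc m₀ M₀ := ⟨le_trans hgmem.1 h1', h2'⟩
          exact ⟨hy, (key x hx y hy).mpr h1'⟩
      rw [hseteq]
      simp [Real.volume_Icc, ENNReal.toReal_ofReal (by linarith [hgmem.2] : (0:ℝ) ≤ M₀ - g x), hgmem.2]
    rw [setIntegral_congr_fun hsm inner]
    have : ∫ x in Icc ξ' η', (M₀ - g x) =
        (∫ x in Icc ξ' η', (M₀ : ℝ)) - ∫ x in Icc ξ' η', g x := by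
      exact integral_sub (integrableOn_const hvfin.ne) hgint
    rw [this, setIntegral_const, smul_eq_mul, hε1, measureReal_def]
    ring
  · -- ε = -1 : f > 0 below, < 0 above
    have key : ∀ x ∈ Icc ξ' η', ∀ y ∈ Icc m₀ M₀, (0 ≤ f x y ↔ y ≤ g x) := by
      intro x hx y hy
      have hx' := hsub hx
      obtain ⟨hpos, hneg⟩ := hsign x hx'
      obtain ⟨hgmem, hg0⟩ := hg x hx'
      have hy0 : y₀ x = g x := by
        rcases lt_trichotomy (y₀ x) (g x) with h1 | h1 | h1
        · have := hneg (g x) hgmem h1; linarith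
        · exact h1
        · have := hpos (g x) hgmem h1; linarith
      constructor
      · intro h0
        by_contra hlt
        push_neg at hlt
        exact absurd h0 (not_le.mpr (hneg y hy (by rw [hy0]; exact hlt)))
      · intro hge
        rcases eq_or_lt_of_le hge with he | hlt
        · rw [he]; exact le_of_eq hg0.symm
        · exact le_of_lt (hpos y hy (by rw [hy0]; exact hlt))
    have inner : ∀ x ∈ Icc ξ' η',
        (∫ y in Icc m₀ M₀, (if 0 ≤ f x y then (1:ℝ) else 0)) = g x - m₀ := by
      intro x hx
      obtain ⟨hgmem, _⟩ := hg x (hsub hx)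
      have h1 : (fun y => if 0 ≤ f x y then (1:ℝ) else 0)
          = Set.indicator {y | 0 ≤ f x y} (fun _ => 1) := by
        funext y; simp [Set.indicator_apply]
      have hmy : MeasurableSet {y : ℝ | 0 ≤ f x y} :=
        (isClosed_le continuous_const (hf.comp (Continuous.prodMk_right x))).measurableSet
      rw [h1, setIntegral_indicator hmy]
      have hseteq : Icc m₀ M₀ ∩ {y : ℝ | 0 ≤ f x y} = Icc m₀ (g x) := by
        ext y
        simp only [mem_inter_iff, mem_Icc, mem_setOf_eq]
        constructor
        · rintro ⟨hy, h0⟩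
          exact ⟨hy.1, (key x hx y hy).mp h0⟩
        · rintro ⟨h1', h2'⟩
          have hy : y ∈ Icc m₀ M₀ := ⟨h1', le_trans h2' hgmem.2⟩
          exact ⟨hy, (key x hx y hy).mpr h2'⟩
      rw [hseteq]
      simp [Real.volume_Icc, ENNReal.toReal_ofReal (by linarith [hgmem.1] : (0:ℝ) ≤ g x - m₀), hgmem.1]
    rw [setIntegral_congr_fun hsm inner]
    have : ∫ x in Icc ξ' η', (g x - m₀) =
        (∫ x in Icc ξ' η', g x) - ∫ x in Icc ξ' η', (m₀ : ℝ) := by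
      exact integral_sub hgint (integrableOn_const hvfin.ne)
    rw [this, setIntegral_const, smul_eq_mul, hε1, measureReal_def]
    ring
end

section
/- Under Assumption 1, let ε ∈ {1, −1} be the constant value of n_y(f) on R. The unique continuous implicit function g : R → I with f(x, g(x)) = 0 on R is given, for every x ∈ R, by the integral representation g(x) = ((1+ε)/2)·M₀ + ((1−ε)/2)·m₀ − ε·∫_I Θ_y f(x,y) dy. -/
open Set MeasureTheory

/-- Under Assumption 1, with `ε ∈ {1, -1}` the constant value of
`n_y(f)` on `R`, the unique continuous implicit function `g : R → I` with
`f (x, g x) = 0` on `R` satisfies, for every `x ∈ R`,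
`g x = ((1+ε)/2)·M₀ + ((1−ε)/2)·m₀ − ε·∫_I Θ_y f (x, y) dy`. -/
theorem statement3 (n : ℕ) (f : (Fin n → ℝ) → ℝ → ℝ)
    (hf : Continuous fun p : (Fin n → ℝ) × ℝ => f p.1 p.2)
    (ξ η : Fin n → ℝ) (hξη : ∀ k, ξ k ≤ η k)
    (m₀ M₀ : ℝ) (hI : m₀ ≤ M₀)
    (y₀ : (Fin n → ℝ) → ℝ)
    (hA : ∀ x ∈ Icc ξ η, y₀ x ∈ Icc m₀ M₀)
    (ε : ℝ)
    (hε : (ε = 1 ∧ ∀ x ∈ Icc ξ η,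
            (∀ y ∈ Icc m₀ M₀, y < y₀ x → f x y < 0) ∧ (∀ y ∈ Icc m₀ M₀, y₀ x < y → 0 < f x y)) ∨
          (ε = -1 ∧ ∀ x ∈ Icc ξ η,
            (∀ y ∈ Icc m₀ M₀, y < y₀ x → 0 < f x y) ∧ (∀ y ∈ Icc m₀ M₀, y₀ x < y → f x y < 0)))
    (g : (Fin n → ℝ) → ℝ)
    (hgc : ContinuousOn g (Icc ξ η))
    (hg : ∀ x ∈ Icc ξ η, g x ∈ Icc m₀ M₀ ∧ f x (g x) = 0)
    (hguniq : ∀ x ∈ Icc ξ η, ∀ y ∈ Icc m₀ M₀, f x y = 0 → y = g x) :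
    ∀ x ∈ Icc ξ η,
      g x = (1 + ε) / 2 * M₀ + (1 - ε) / 2 * m₀ -
        ε * ∫ y in Icc m₀ M₀, (if 0 ≤ f x y then (1 : ℝ) else 0) := by
  intro x hx
  obtain ⟨hgI, hfg⟩ := hg x hx
  obtain ⟨hy0m, hy0M⟩ := hA x hx
  rcases hε with ⟨hε1, h⟩ | ⟨hε1, h⟩
  · obtain ⟨h1, h2⟩ := h x hx
    have hgx : g x = y₀ x := by
      rcases lt_trichotomy (g x) (y₀ x) with hlt | heq | hgt
      · have := h1 (g x) hgI hlt; linarith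
      · exact heq
      · have := h2 (g x) hgI hgt; linarith
    have key : EqOn (fun y => if 0 ≤ f x y then (1 : ℝ) else 0)
        (fun y => (Ici (y₀ x)).indicator (fun _ => (1:ℝ)) y) (Icc m₀ M₀) := by
      intro y hy
      simp only [indicator_apply, mem_Ici]
      rcases lt_trichotomy y (y₀ x) with hlt | heq | hgt
      · have := h1 y hy hlt
        rw [if_neg (by linarith), if_neg (by linarith)]
      · rw [if_pos (by rw [heq, ← hgx]; exact hfg.ge), if_pos heq.ge]
      · have := h2 y hy hgt
        rw [if_pos this.le, if_pos hgt.le]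
    have hint : (∫ y in Icc m₀ M₀, (if 0 ≤ f x y then (1 : ℝ) else 0)) = M₀ - y₀ x := by
      have hset : Icc m₀ M₀ ∩ Ici (y₀ x) = Icc (y₀ x) M₀ := by
        ext y
        simp only [mem_inter_iff, mem_Icc, mem_Ici]
        constructor
        · rintro ⟨⟨_, h2⟩, h3⟩; exact ⟨h3, h2⟩
        · rintro ⟨h1', h2⟩; exact ⟨⟨by linarith, h2⟩, h1'⟩
      rw [setIntegral_congr_fun measurableSet_Icc key,
        setIntegral_indicator (measurableSet_Ici), hset, setIntegral_const, Real.volume_real_Icc_of_le (by linarith), smul_eq_mul, mul_one]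
    rw [hint, hε1, hgx]; ring
  · obtain ⟨h1, h2⟩ := h x hx
    have hgx : g x = y₀ x := by
      rcases lt_trichotomy (g x) (y₀ x) with hlt | heq | hgt
      · have := h1 (g x) hgI hlt; linarith
      · exact heq
      · have := h2 (g x) hgI hgt; linarith
    have key : EqOn (fun y => if 0 ≤ f x y then (1 : ℝ) else 0)
        (fun y => (Iic (y₀ x)).indicator (fun _ => (1:ℝ)) y) (Icc m₀ M₀) := by
      intro y hy
      simp only [indicator_apply, mem_Iic]
      rcases lt_trichotomy y (y₀ x) with hlt | heq | hgt
      · have := h1 y hy hlt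
        rw [if_pos this.le, if_pos hlt.le]
      · rw [if_pos (by rw [heq, ← hgx]; exact hfg.ge), if_pos heq.le]
      · have := h2 y hy hgt
        rw [if_neg (by linarith), if_neg (by linarith)]
    have hint : (∫ y in Icc m₀ M₀, (if 0 ≤ f x y then (1 : ℝ) else 0)) = y₀ x - m₀ := by
      have hset : Icc m₀ M₀ ∩ Iic (y₀ x) = Icc m₀ (y₀ x) := by
        ext y
        simp only [mem_inter_iff, mem_Icc, mem_Iic]
        constructor
        · rintro ⟨⟨h1', _⟩, h3⟩; exact ⟨h1', h3⟩
        · rintro ⟨h1', h2⟩; exact ⟨⟨h1', by linarith⟩, h2⟩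
      rw [setIntegral_congr_fun measurableSet_Icc key,
        setIntegral_indicator (measurableSet_Iic), hset, setIntegral_const, Real.volume_real_Icc_of_le (by linarith), smul_eq_mul, mul_one]
    rw [hint, hε1, hgx]; ring
end

section
/- The determinant of V_N equals ∏_{0≤i<j≤N} (j−i)Δ (that is, Δ^{N(N+1)/2}·∏_{0≤i<j≤N}(j−i)); in particular det V_N is strictly positive, does not depend on the point a, and V_N is invertible. -/
open Finset

lemma aux_prod_swap {n : ℕ} (f : ℕ → ℕ → ℝ) :
    (∏ i : Fin n, ∏ j ∈ Ioi i, f (i : ℕ) (j : ℕ)) =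
      ∏ j ∈ Finset.range n, ∏ i ∈ Finset.range j, f i j := by
  rw [Finset.prod_comm' (t' := (Finset.univ : Finset (Fin n))) (s' := fun j => Iio j)
    (by intro i j; simp [Finset.mem_Ioi, Finset.mem_Iio])]
  rw [← Fin.prod_univ_eq_prod_range (fun j => ∏ i ∈ Finset.range j, f i j) n]
  refine Finset.prod_congr rfl fun j _ => ?_
  rw [← Nat.Iio_eq_range, ← Fin.map_valEmbedding_Iio (a := j), Finset.prod_map]
  rfl

/-- The determinant of `V_N` equals `∏_{0 ≤ i < j ≤ N} (j−i)Δ`;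
in particular it is strictly positive, does not depend on the point `a`
(the right-hand side does not involve `a`), and `V_N` is invertible. -/
theorem statement4 (ξ η : ℝ) (hξη : ξ < η) (N : ℕ) (hN : 0 < N) (a : ℝ)
    (V : Matrix (Fin N) (Fin N) ℝ)
    (hV : ∀ α j : Fin N,
      V α j = (ξ + ((α : ℕ) + 1) * ((η - ξ) / N) - a) ^ ((j : ℕ) + 1) -
        (ξ + (α : ℕ) * ((η - ξ) / N) - a) ^ ((j : ℕ) + 1)) :
    V.det = (∏ j ∈ Finset.range (N + 1), ∏ i ∈ Finset.range j, (((j : ℝ) - (i : ℝ)) * ((η - ξ) / N)))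
      ∧ 0 < V.det ∧ IsUnit V := by
  set Δ : ℝ := (η - ξ) / N with hΔdef
  have hΔpos : 0 < Δ := div_pos (sub_pos.mpr hξη) (by exact_mod_cast hN)
  set x : Fin (N + 1) → ℝ := fun i => ξ + (i : ℕ) * Δ - a with hx
  -- The row-difference matrix B
  set B : Matrix (Fin (N + 1)) (Fin (N + 1)) ℝ := fun i j =>
    Fin.cases (x 0 ^ (j : ℕ))
      (fun i' => x i'.succ ^ (j : ℕ) - x i'.castSucc ^ (j : ℕ)) i with hB
  have hdetB : (Matrix.vandermonde x).det = B.det := by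
    refine Matrix.det_eq_of_forall_row_eq_smul_add_pred (fun _ => 1) (fun j => ?_)
      (fun i j => ?_)
    · simp [hB, Matrix.vandermonde_apply]
    · simp [hB, Matrix.vandermonde_apply]
  -- Expand B along column 0
  have hcol0 : ∀ i : Fin (N + 1), B i 0 = if i = 0 then 1 else 0 := by
    intro i
    induction i using Fin.cases with
    | zero => simp [hB]
    | succ i' => simp [hB, Fin.succ_ne_zero]
  have hsub : B.submatrix (Fin.succAbove 0) Fin.succ = V := by
    funext α j
    have h1 : (Fin.succAbove 0) α = α.succ := rfl
    rw [Matrix.submatrix_apply, h1, hV α j]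
    simp only [hB, Fin.cases_succ, hx, Fin.val_succ, Fin.coe_castSucc]
    push_cast
    ring_nf
  have hdetBV : B.det = V.det := by
    rw [Matrix.det_succ_column_zero]
    rw [Finset.sum_eq_single 0]
    · rw [hcol0 0, hsub]; simp
    · intro i _ hi
      rw [hcol0 i, if_neg hi]; ring
    · intro h; exact absurd (Finset.mem_univ 0) h
  have hvdm : (Matrix.vandermonde x).det =
      ∏ j ∈ Finset.range (N + 1), ∏ i ∈ Finset.range j, (((j : ℝ) - (i : ℝ)) * Δ) := by
    rw [Matrix.det_vandermonde]
    rw [← aux_prod_swap (fun i j => ((j : ℝ) - (i : ℝ)) * Δ)]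
    refine Finset.prod_congr rfl fun i _ => Finset.prod_congr rfl fun j _ => ?_
    simp only [hx]
    ring
  have hdet : V.det =
      ∏ j ∈ Finset.range (N + 1), ∏ i ∈ Finset.range j, (((j : ℝ) - (i : ℝ)) * Δ) := by
    rw [← hdetBV, ← hdetB, hvdm]
  have hpos : 0 < V.det := by
    rw [hdet]
    refine Finset.prod_pos fun j _ => Finset.prod_pos fun i hi => ?_
    have : (i : ℝ) < (j : ℝ) := by exact_mod_cast Finset.mem_range.mp hi
    exact mul_pos (by linarith) hΔpos
  exact ⟨hdet, hpos, (Matrix.isUnit_iff_isUnit_det V).mpr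
    (isUnit_iff_ne_zero.mpr (ne_of_gt hpos))⟩
end

section
/- Let g : R → ℝ be a multivariate polynomial of the form g(x) = Σ_{0≤β<N} c_β (x−a)^β (so the degree of g in x_k is less than N_k for each k), and set d_α = ∫_{R_α} g(x) dx for each grid multi-index α. Then the coefficient family (c_β)_{0≤β<N} is the unique solution of the linear system Σ_{0≤β<N} c_β ∏_{k=1}^n [ ((ξ_k + α_kΔ_k − a_k)^{β_k+1} − (ξ_k + (α_k−1)Δ_k − a_k)^{β_k+1}) / (β_k+1) ] = d_α over all 1 ≤ α ≤ N. In particular, the linear map sending a coefficient family (c_β)_{0≤β<N} to the family of block integrals ( ∫_{R_α} Σ_β c_β (x−a)^β dx )_{1≤α≤N} is bijective, so g is uniquely determined by its block integrals (d_α). -/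
open Set MeasureTheory

open Set MeasureTheory Polynomial

section Aux

lemma integral_pow_Icc (l u a : ℝ) (h : l ≤ u) (m : ℕ) :
    ∫ x in Icc l u, (x - a) ^ m =
      ((u - a) ^ (m + 1) - (l - a) ^ (m + 1)) / ((m : ℝ) + 1) := by
  rw [MeasureTheory.integral_Icc_eq_integral_Ioc, ← intervalIntegral.integral_of_le h,
    intervalIntegral.integral_comp_sub_right (fun x => x ^ m) a, integral_pow]

lemma box_integral {n : ℕ} (f : Fin n → ℝ → ℝ) (l u : Fin n → ℝ) :
    ∫ x in Icc l u, ∏ k, f k (x k) = ∏ k, ∫ x in Icc (l k) (u k), f k x := by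
  rw [← pi_univ_Icc, ← MeasureTheory.integral_indicator
    (MeasurableSet.univ_pi fun k => measurableSet_Icc)]
  have h : ∀ x : Fin n → ℝ,
      (Set.pi univ fun k => Icc (l k) (u k)).indicator (fun x => ∏ k, f k (x k)) x
        = ∏ k, (Icc (l k) (u k)).indicator (f k) (x k) := by
    intro x
    by_cases hx : x ∈ Set.pi univ fun k => Icc (l k) (u k)
    · rw [Set.indicator_of_mem hx]
      exact Finset.prod_congr rfl fun k _ =>
        (Set.indicator_of_mem (hx k (Set.mem_univ k)) _).symm
    · rw [Set.indicator_of_notMem hx]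
      rw [Set.mem_univ_pi, not_forall] at hx
      obtain ⟨k, hk⟩ := hx
      exact (Finset.prod_eq_zero (Finset.mem_univ k)
        (Set.indicator_of_notMem hk _)).symm
  simp_rw [h]
  rw [MeasureTheory.integral_fintype_prod_volume_eq_prod]
  exact Finset.prod_congr rfl fun k _ =>
    MeasureTheory.integral_indicator (measurableSet_Icc (a := l k) (b := u k))

lemma key_integral {n : ℕ} (a l u : Fin n → ℝ) (hlu : ∀ k, l k ≤ u k)
    (Nn : Fin n → ℕ) (c' : ((k : Fin n) → Fin (Nn k)) → ℝ) :
    ∫ x in Icc l u, ∑ β : (k : Fin n) → Fin (Nn k), c' β * ∏ k, (x k - a k) ^ ((β k : ℕ))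
      = ∑ β : (k : Fin n) → Fin (Nn k), c' β *
          ∏ k, ((u k - a k) ^ ((β k : ℕ) + 1) - (l k - a k) ^ ((β k : ℕ) + 1)) /
            (((β k : ℕ) : ℝ) + 1) := by
  rw [MeasureTheory.integral_finset_sum]
  · refine Finset.sum_congr rfl fun β _ => ?_
    rw [MeasureTheory.integral_const_mul,
      box_integral (fun k x => (x - a k) ^ ((β k : ℕ))) l u]
    congr 1
    exact Finset.prod_congr rfl fun k _ => integral_pow_Icc (l k) (u k) (a k) (hlu k) _
  · intro β _
    have hcont : Continuous fun x : Fin n → ℝ =>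
        c' β * ∏ k, (x k - a k) ^ ((β k : ℕ)) :=
      continuous_const.mul (continuous_finset_prod _ fun k _ =>
        ((continuous_apply k).sub continuous_const).pow _)
    exact hcont.continuousOn.integrableOn_compact isCompact_Icc

lemma onedim (N : ℕ) (s : Fin (N + 1) → ℝ) (hs : Function.Injective s)
    (v : Fin N → ℝ)
    (hv : ∀ α : Fin N, ∑ β : Fin N, v β *
      ((s α.succ ^ ((β : ℕ) + 1) - s α.castSucc ^ ((β : ℕ) + 1)) / (((β : ℕ) : ℝ) + 1)) = 0) :
    v = 0 := by
  set P : ℝ[X] := ∑ β : Fin N, C (v β / (((β : ℕ) : ℝ) + 1)) * X ^ ((β : ℕ) + 1) with hP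
  have heval : ∀ t : ℝ, P.eval t = ∑ β : Fin N, v β / (((β : ℕ) : ℝ) + 1) * t ^ ((β : ℕ) + 1) := by
    intro t
    simp [hP, eval_finset_sum]
  have hstep : ∀ α : Fin N, P.eval (s α.succ) = P.eval (s α.castSucc) := by
    intro α
    have h0 := hv α
    have h1 : ∑ β : Fin N, (v β / (((β : ℕ) : ℝ) + 1) * s α.succ ^ ((β : ℕ) + 1)
        - v β / (((β : ℕ) : ℝ) + 1) * s α.castSucc ^ ((β : ℕ) + 1)) = 0 := by
      rw [← h0]
      exact Finset.sum_congr rfl fun β _ => by ring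
    rw [Finset.sum_sub_distrib] at h1
    rw [heval, heval]
    linarith [h1]
  have hall : ∀ i : Fin (N + 1), P.eval (s i) = P.eval (s 0) := by
    intro i
    induction i using Fin.induction with
    | zero => rfl
    | succ j ih => rw [hstep j, ih]
  have hdegP : P.natDegree ≤ N := by
    apply Polynomial.natDegree_sum_le_of_forall_le
    intro β _
    calc (C (v β / (((β : ℕ) : ℝ) + 1)) * X ^ ((β : ℕ) + 1)).natDegree
        ≤ (β : ℕ) + 1 := by
          exact (Polynomial.natDegree_C_mul_le _ _).trans
            (le_of_eq (Polynomial.natDegree_X_pow _))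
      _ ≤ N := β.isLt
  set Q : ℝ[X] := P - C (P.eval (s 0)) with hQ
  have hQ0 : Q = 0 := by
    apply Polynomial.eq_zero_of_natDegree_lt_card_of_eval_eq_zero Q hs
    · intro i
      simp [hQ, hall i]
    · calc Q.natDegree ≤ max P.natDegree (C (P.eval (s 0))).natDegree :=
          Polynomial.natDegree_sub_le _ _
        _ ≤ N := by simp [hdegP]
        _ < N + 1 := Nat.lt_succ_self N
        _ = Fintype.card (Fin (N + 1)) := by simp
  funext β
  have hc : Q.coeff ((β : ℕ) + 1) = v β / (((β : ℕ) : ℝ) + 1) := by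
    simp only [hQ, hP, Polynomial.coeff_sub, Polynomial.finset_sum_coeff,
      Polynomial.coeff_C_mul, Polynomial.coeff_X_pow, Polynomial.coeff_C]
    rw [Finset.sum_eq_single β]
    · simp
    · intro b _ hb
      rw [if_neg (fun h : ((β : ℕ) + 1 = (b : ℕ) + 1) =>
        hb (Fin.ext (Nat.succ_injective h.symm)))]
      simp
    · simp
  rw [hQ0] at hc
  simp only [Polynomial.coeff_zero] at hc
  have hne : (((β : ℕ) : ℝ) + 1) ≠ 0 := by positivity
  have := (div_eq_zero_iff.mp hc.symm).resolve_right hne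
  simpa using this

lemma tensor_inj : ∀ (n : ℕ) (D : Fin n → ℕ)
    (M : ∀ k : Fin n, Fin (D k) → Fin (D k) → ℝ),
    (∀ k (v : Fin (D k) → ℝ), (∀ α, ∑ β, v β * M k α β = 0) → v = 0) →
    ∀ (c : ((k : Fin n) → Fin (D k)) → ℝ),
    (∀ α : (k : Fin n) → Fin (D k),
      ∑ β : (k : Fin n) → Fin (D k), c β * ∏ k, M k (α k) (β k) = 0) → c = 0 := by
  intro n
  induction n with
  | zero =>
    intro D M hM c hc
    funext β
    have := hc β
    simpa [Finset.univ_unique, Subsingleton.elim (default : (k : Fin 0) → Fin (D k)) β]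
      using this
  | succ n ih =>
    intro D M hM c hc
    have he : Function.Bijective
        (fun p : Fin (D 0) × ((k : Fin n) → Fin (D k.succ)) =>
          (Fin.cons p.1 p.2 : (k : Fin (n + 1)) → Fin (D k))) := by
      constructor
      · rintro ⟨x1, x2⟩ ⟨y1, y2⟩ h
        have h0 := congrFun h 0
        simp only [Fin.cons_zero] at h0
        have hs : x2 = y2 := by
          funext k
          have := congrFun h k.succ
          simpa [Fin.cons_succ] using this
        simp [h0, hs]
      · intro β
        exact ⟨⟨β 0, fun k => β k.succ⟩, Fin.cons_self_tail β⟩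
    have hsum : ∀ (F : ((k : Fin (n + 1)) → Fin (D k)) → ℝ),
        ∑ β : (k : Fin (n + 1)) → Fin (D k), F β
          = ∑ β0 : Fin (D 0), ∑ βr : (k : Fin n) → Fin (D k.succ), F (Fin.cons β0 βr) := by
      intro F
      rw [← Fintype.sum_bijective _ he (fun p => F (Fin.cons p.1 p.2)) F (fun p => rfl)]
      exact Fintype.sum_prod_type fun p => F (Fin.cons p.1 p.2)
    have key : ∀ (αr : (k : Fin n) → Fin (D k.succ)) (β0 : Fin (D 0)),
        ∑ βr : (k : Fin n) → Fin (D k.succ),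
          c (Fin.cons β0 βr) * ∏ k : Fin n, M k.succ (αr k) (βr k) = 0 := by
      intro αr
      have h0 : ∀ α0 : Fin (D 0),
          ∑ β0 : Fin (D 0), (∑ βr : (k : Fin n) → Fin (D k.succ),
            c (Fin.cons β0 βr) * ∏ k : Fin n, M k.succ (αr k) (βr k)) * M 0 α0 β0 = 0 := by
        intro α0
        have hc' := hc ((Fin.cons α0 αr : (k : Fin (n + 1)) → Fin (D k)))
        rw [hsum] at hc'
        rw [← hc']
        apply Finset.sum_congr rfl
        intro β0 _
        rw [Finset.sum_mul]
        apply Finset.sum_congr rfl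
        intro βr _
        rw [Fin.prod_univ_succ]
        simp only [Fin.cons_zero, Fin.cons_succ]
        ring
      have := hM 0 (fun β0 => ∑ βr : (k : Fin n) → Fin (D k.succ),
        c (Fin.cons β0 βr) * ∏ k : Fin n, M k.succ (αr k) (βr k)) h0
      intro β0
      exact congrFun this β0
    funext β
    have := congrFun (ih (fun k => D k.succ) (fun k => M k.succ) (fun k => hM k.succ)
      (fun βr => c (Fin.cons (β 0) βr)) (fun αr => key αr (β 0))) (fun k => β k.succ)
    simpa [show (Fin.cons (β 0) fun k => β k.succ) = β from Fin.cons_self_tail β] using this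

end Aux

/-- For a multivariate polynomial `g x = Σ_{0 ≤ β < N} c β (x−a)^β`,
the coefficient family `(c β)` is the unique solution of the linear system
`Σ_β c β ∏_k ((ξ_k + α_kΔ_k − a_k)^{β_k+1} − (ξ_k + (α_k−1)Δ_k − a_k)^{β_k+1})/(β_k+1) = d α`
where `d α = ∫_{R_α} g`; in particular the linear map sending a coefficient family to the
family of its block integrals is bijective. -/
theorem statement5 (n : ℕ) (Nn : Fin n → ℕ) (hNn : ∀ k, 0 < Nn k)
    (ξ η : Fin n → ℝ) (hξη : ∀ k, ξ k < η k) (a : Fin n → ℝ)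
    (c : ((k : Fin n) → Fin (Nn k)) → ℝ)
    (g : (Fin n → ℝ) → ℝ)
    (hg : ∀ x, g x = ∑ β : (k : Fin n) → Fin (Nn k), c β * ∏ k, (x k - a k) ^ ((β k : ℕ)))
    (d : ((k : Fin n) → Fin (Nn k)) → ℝ)
    (hd : ∀ α : (k : Fin n) → Fin (Nn k),
      d α = ∫ x in Icc (fun k => ξ k + ((α k : ℕ) : ℝ) * ((η k - ξ k) / (Nn k : ℝ)))
          (fun k => ξ k + (((α k : ℕ) : ℝ) + 1) * ((η k - ξ k) / (Nn k : ℝ))), g x) :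
    (∀ α : (k : Fin n) → Fin (Nn k),
      ∑ β : (k : Fin n) → Fin (Nn k), c β *
        ∏ k, (((ξ k + (((α k : ℕ) : ℝ) + 1) * ((η k - ξ k) / (Nn k : ℝ)) - a k) ^ ((β k : ℕ) + 1) -
            (ξ k + ((α k : ℕ) : ℝ) * ((η k - ξ k) / (Nn k : ℝ)) - a k) ^ ((β k : ℕ) + 1)) /
          (((β k : ℕ) : ℝ) + 1)) = d α) ∧
    (∀ c' : ((k : Fin n) → Fin (Nn k)) → ℝ,
      (∀ α : (k : Fin n) → Fin (Nn k),
        ∑ β : (k : Fin n) → Fin (Nn k), c' β *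
          ∏ k, (((ξ k + (((α k : ℕ) : ℝ) + 1) * ((η k - ξ k) / (Nn k : ℝ)) - a k) ^ ((β k : ℕ) + 1) -
              (ξ k + ((α k : ℕ) : ℝ) * ((η k - ξ k) / (Nn k : ℝ)) - a k) ^ ((β k : ℕ) + 1)) /
            (((β k : ℕ) : ℝ) + 1)) = d α) → c' = c) ∧
    Function.Bijective (fun (c' : ((k : Fin n) → Fin (Nn k)) → ℝ) (α : (k : Fin n) → Fin (Nn k)) =>
      ∫ x in Icc (fun k => ξ k + ((α k : ℕ) : ℝ) * ((η k - ξ k) / (Nn k : ℝ)))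
          (fun k => ξ k + (((α k : ℕ) : ℝ) + 1) * ((η k - ξ k) / (Nn k : ℝ))),
        ∑ β : (k : Fin n) → Fin (Nn k), c' β * ∏ k, (x k - a k) ^ ((β k : ℕ))) := by
  have hΔ : ∀ k, 0 < (η k - ξ k) / (Nn k : ℝ) := fun k =>
    div_pos (sub_pos.mpr (hξη k)) (Nat.cast_pos.mpr (hNn k))
  have hpart : ∀ (c' : ((k : Fin n) → Fin (Nn k)) → ℝ) (α : (k : Fin n) → Fin (Nn k)),
      (∫ x in Icc (fun k => ξ k + ((α k : ℕ) : ℝ) * ((η k - ξ k) / (Nn k : ℝ)))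
          (fun k => ξ k + (((α k : ℕ) : ℝ) + 1) * ((η k - ξ k) / (Nn k : ℝ))),
        ∑ β : (k : Fin n) → Fin (Nn k), c' β * ∏ k, (x k - a k) ^ ((β k : ℕ)))
      = ∑ β : (k : Fin n) → Fin (Nn k), c' β *
          ∏ k, (((ξ k + (((α k : ℕ) : ℝ) + 1) * ((η k - ξ k) / (Nn k : ℝ)) - a k) ^ ((β k : ℕ) + 1) -
              (ξ k + ((α k : ℕ) : ℝ) * ((η k - ξ k) / (Nn k : ℝ)) - a k) ^ ((β k : ℕ) + 1)) /
            (((β k : ℕ) : ℝ) + 1)) := by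
    intro c' α
    have hlu : ∀ k, (ξ k + ((α k : ℕ) : ℝ) * ((η k - ξ k) / (Nn k : ℝ)))
        ≤ ξ k + (((α k : ℕ) : ℝ) + 1) * ((η k - ξ k) / (Nn k : ℝ)) := by
      intro k
      nlinarith [hΔ k]
    exact key_integral a _ _ hlu Nn c'
  have hM : ∀ (k : Fin n) (v : Fin (Nn k) → ℝ),
      (∀ α : Fin (Nn k), ∑ β : Fin (Nn k), v β *
        (((ξ k + (((α : ℕ) : ℝ) + 1) * ((η k - ξ k) / (Nn k : ℝ)) - a k) ^ ((β : ℕ) + 1) -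
          (ξ k + ((α : ℕ) : ℝ) * ((η k - ξ k) / (Nn k : ℝ)) - a k) ^ ((β : ℕ) + 1)) /
          (((β : ℕ) : ℝ) + 1)) = 0) → v = 0 := by
    intro k v hv
    apply onedim (Nn k)
      (fun i : Fin (Nn k + 1) => ξ k + ((i : ℕ) : ℝ) * ((η k - ξ k) / (Nn k : ℝ)) - a k)
    · intro i j hij
      dsimp only at hij
      have h1 : ((i : ℕ) : ℝ) * ((η k - ξ k) / (Nn k : ℝ))
          = ((j : ℕ) : ℝ) * ((η k - ξ k) / (Nn k : ℝ)) := by linarith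
      have h2 : ((i : ℕ) : ℝ) = ((j : ℕ) : ℝ) :=
        mul_right_cancel₀ (ne_of_gt (hΔ k)) h1
      exact Fin.ext (by exact_mod_cast h2)
    · intro α
      have e1 : (((α.succ : Fin (Nn k + 1)) : ℕ) : ℝ) = ((α : ℕ) : ℝ) + 1 := by
        rw [Fin.val_succ]; push_cast; ring
      have e2 : (((α.castSucc : Fin (Nn k + 1)) : ℕ) : ℝ) = ((α : ℕ) : ℝ) := by
        rw [Fin.coe_castSucc]
      simp only [e1, e2]
      exact hv α
  have hhom : ∀ (e : ((k : Fin n) → Fin (Nn k)) → ℝ),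
      (∀ α : (k : Fin n) → Fin (Nn k),
        ∑ β : (k : Fin n) → Fin (Nn k), e β *
          ∏ k, (((ξ k + (((α k : ℕ) : ℝ) + 1) * ((η k - ξ k) / (Nn k : ℝ)) - a k) ^ ((β k : ℕ) + 1) -
              (ξ k + ((α k : ℕ) : ℝ) * ((η k - ξ k) / (Nn k : ℝ)) - a k) ^ ((β k : ℕ) + 1)) /
            (((β k : ℕ) : ℝ) + 1)) = 0) → e = 0 :=
    tensor_inj n Nn
      (fun k α β =>
        ((ξ k + (((α : ℕ) : ℝ) + 1) * ((η k - ξ k) / (Nn k : ℝ)) - a k) ^ ((β : ℕ) + 1) -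
          (ξ k + ((α : ℕ) : ℝ) * ((η k - ξ k) / (Nn k : ℝ)) - a k) ^ ((β : ℕ) + 1)) /
          (((β : ℕ) : ℝ) + 1)) hM
  have hpart1 : ∀ α : (k : Fin n) → Fin (Nn k),
      ∑ β : (k : Fin n) → Fin (Nn k), c β *
        ∏ k, (((ξ k + (((α k : ℕ) : ℝ) + 1) * ((η k - ξ k) / (Nn k : ℝ)) - a k) ^ ((β k : ℕ) + 1) -
            (ξ k + ((α k : ℕ) : ℝ) * ((η k - ξ k) / (Nn k : ℝ)) - a k) ^ ((β k : ℕ) + 1)) /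
          (((β k : ℕ) : ℝ) + 1)) = d α := by
    intro α
    rw [hd α]
    simp only [hg]
    exact (hpart c α).symm
  refine ⟨hpart1, ?_, ?_⟩
  · intro c' hc'
    have h0 : ∀ α : (k : Fin n) → Fin (Nn k),
        ∑ β : (k : Fin n) → Fin (Nn k), (c' β - c β) *
          ∏ k, (((ξ k + (((α k : ℕ) : ℝ) + 1) * ((η k - ξ k) / (Nn k : ℝ)) - a k) ^ ((β k : ℕ) + 1) -
              (ξ k + ((α k : ℕ) : ℝ) * ((η k - ξ k) / (Nn k : ℝ)) - a k) ^ ((β k : ℕ) + 1)) /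
            (((β k : ℕ) : ℝ) + 1)) = 0 := by
      intro α
      simp only [sub_mul]
      rw [Finset.sum_sub_distrib, hc' α, hpart1 α, sub_self]
    have he := hhom _ h0
    funext β
    have := congrFun he β
    simpa [sub_eq_zero] using this
  · let K : ((k : Fin n) → Fin (Nn k)) → ((k : Fin n) → Fin (Nn k)) → ℝ := fun α β =>
      ∏ k, (((ξ k + (((α k : ℕ) : ℝ) + 1) * ((η k - ξ k) / (Nn k : ℝ)) - a k) ^ ((β k : ℕ) + 1) -
          (ξ k + ((α k : ℕ) : ℝ) * ((η k - ξ k) / (Nn k : ℝ)) - a k) ^ ((β k : ℕ) + 1)) /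
        (((β k : ℕ) : ℝ) + 1))
    let L : (((k : Fin n) → Fin (Nn k)) → ℝ) →ₗ[ℝ] (((k : Fin n) → Fin (Nn k)) → ℝ) :=
      { toFun := fun c' α => ∑ β : (k : Fin n) → Fin (Nn k), c' β * K α β
        map_add' := by
          intro x y
          funext α
          simp [add_mul, Finset.sum_add_distrib]
        map_smul' := by
          intro m x
          funext α
          simp [Finset.mul_sum, mul_assoc] }
    have hfun : (fun (c' : ((k : Fin n) → Fin (Nn k)) → ℝ) (α : (k : Fin n) → Fin (Nn k)) =>
        ∫ x in Icc (fun k => ξ k + ((α k : ℕ) : ℝ) * ((η k - ξ k) / (Nn k : ℝ)))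
            (fun k => ξ k + (((α k : ℕ) : ℝ) + 1) * ((η k - ξ k) / (Nn k : ℝ))),
          ∑ β : (k : Fin n) → Fin (Nn k), c' β * ∏ k, (x k - a k) ^ ((β k : ℕ))) = ⇑L :=
      funext fun c' => funext fun α => hpart c' α
    rw [hfun]
    have hinjL : Function.Injective L := by
      rw [← LinearMap.ker_eq_bot, LinearMap.ker_eq_bot']
      intro e heL
      exact hhom e fun α => congrFun heL α
    exact ⟨hinjL, LinearMap.injective_iff_surjective.mp hinjL⟩
end

section
/- Suppose f : ℝ^n × ℝ → ℝ is continuously differentiable near (a,b), f(a,b) = 0, ∂_y f(a,b) ≠ 0, and the implicit function y = g(x) with g(a) = b and f(x, g(x)) = 0 near a is a multivariate polynomial. Then there is a compact rectangle R × I containing (a,b), with R = ∏_{k=1}^n [ξ_k, η_k] and I = [m₀, M₀], such that (f, R, I) satisfies Assumption 1 with constant sign ε = n_y(f), and for every grid partition of R with N_k greater than the degree of g in x_k for each k, the coefficients (c_β)_{0≤β<N} of g(x) = Σ_{0≤β<N} c_β (x−a)^β are the unique solution of the linear system Σ_{0≤β<N} c_β ∏_{k=1}^n [ ((ξ_k +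 α_kΔ_k − a_k)^{β_k+1} − (ξ_k + (α_k−1)Δ_k − a_k)^{β_k+1}) / (β_k+1) ] = d_α, where d_α = ((1+ε)/2)·|R_α|·M₀ + ((1−ε)/2)·|R_α|·m₀ − ε·∬_{R_α×I} Θ_y f(x,y) dx dy. -/
open Set MeasureTheory

lemma exists_zero_in_Ioo {p : ℝ → ℝ} {u v : ℝ} (hc : ContinuousOn p (Set.Icc u v))
    (huv : u < v) (h0 : ∫ t in u..v, p t = 0) : ∃ r ∈ Set.Ioo u v, p r = 0 := by
  by_contra hcon
  push_neg at hcon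
  have hint : IntervalIntegrable p volume u v := by
    apply ContinuousOn.intervalIntegrable
    rwa [Set.uIcc_of_le huv.le]
  -- constant sign claim
  have key : ∀ q : ℝ → ℝ, ContinuousOn q (Set.Icc u v) → (∀ r ∈ Set.Ioo u v, q r ≠ 0) →
      ∀ x0 ∈ Set.Ioo u v, 0 < q x0 → ∀ x ∈ Set.Ioo u v, 0 < q x := by
    intro q hq hqne x0 hx0 hq0 x hx
    by_contra hle
    push_neg at hle
    have hlt : q x < 0 := lt_of_le_of_ne hle (hqne x hx)
    have hsub : Set.uIcc x0 x ⊆ Set.Ioo u v := by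
      intro y hy
      rcases hy with ⟨h1, h2⟩
      constructor
      · exact lt_of_lt_of_le (lt_min hx0.1 hx.1) h1
      · exact lt_of_le_of_lt h2 (max_lt hx0.2 hx.2)
    have hqc : ContinuousOn q (Set.uIcc x0 x) :=
      hq.mono (hsub.trans Set.Ioo_subset_Icc_self)
    have : (0:ℝ) ∈ Set.uIcc (q x0) (q x) := by
      rw [Set.mem_uIcc]
      right; exact ⟨hlt.le, hq0.le⟩
    obtain ⟨c, hc1, hc2⟩ := intermediate_value_uIcc hqc this
    exact hqne c (hsub hc1) hc2
  set x0 := (u + v) / 2 with hx0def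
  have hx0 : x0 ∈ Set.Ioo u v := by constructor <;> [skip; skip] <;> simp [hx0def] <;> linarith
  rcases lt_or_gt_of_ne (hcon x0 hx0) with hneg | hpos
  · -- p x0 < 0 : apply to -p
    have h1 : ∀ x ∈ Set.Ioo u v, 0 < -p x := by
      apply key (fun t => -p t) (hc.neg) (fun r hr => neg_ne_zero.mpr (hcon r hr)) x0 hx0
      simpa using hneg
    have : 0 < ∫ t in u..v, -p t :=
      intervalIntegral.intervalIntegral_pos_of_pos_on hint.neg h1 huv
    rw [intervalIntegral.integral_neg, h0] at this
    simp at this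
  · have h1 : ∀ x ∈ Set.Ioo u v, 0 < p x := key p hc hcon x0 hx0 hpos
    have : 0 < ∫ t in u..v, p t :=
      intervalIntegral.intervalIntegral_pos_of_pos_on hint h1 huv
    rw [h0] at this
    simp at this


lemma moment_eq (aa u w : ℝ) (j : ℕ) :
    ∫ t in u..w, (t - aa) ^ j = ((w - aa) ^ (j+1) - (u - aa) ^ (j+1)) / ((j:ℝ)+1) := by
  rw [intervalIntegral.integral_comp_sub_right (fun s => s ^ j) aa, integral_pow]

lemma oneD_det {N : ℕ} (aa lo Δ : ℝ) (hΔ : 0 < Δ) :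
    (Matrix.of fun i j : Fin N =>
      ((lo + ((i:ℕ)+1 : ℝ) * Δ - aa) ^ ((j:ℕ)+1) - (lo + ((i:ℕ) : ℝ) * Δ - aa) ^ ((j:ℕ)+1))
        / (((j:ℕ) : ℝ) + 1)).det ≠ 0 := by
  intro hdet
  obtain ⟨v, hv0, hveq⟩ := (Matrix.exists_mulVec_eq_zero_iff).mpr hdet
  set P : Polynomial ℝ := ∑ β : Fin N, Polynomial.C (v β) * Polynomial.X ^ (β:ℕ) with hP
  have hcoeff : ∀ j : Fin N, P.coeff (j:ℕ) = v j := by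
    intro j
    rw [hP, Polynomial.finset_sum_coeff]
    have : ∀ β : Fin N, (Polynomial.C (v β) * Polynomial.X ^ (β:ℕ)).coeff (j:ℕ)
        = if β = j then v β else 0 := by
      intro β
      rw [Polynomial.coeff_C_mul, Polynomial.coeff_X_pow]
      by_cases h : β = j
      · simp [h]
      · have : (j:ℕ) ≠ (β:ℕ) := fun hh => h (Fin.ext hh.symm)
        simp [h, this]
    rw [Finset.sum_congr rfl fun β _ => this β, Finset.sum_ite_eq' Finset.univ j v]
    simp
  have hPne : P ≠ 0 := by
    intro h
    apply hv0
    funext j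
    rw [← hcoeff j, h]
    simp
  have hdeg : P.natDegree < N := by
    rw [Polynomial.natDegree_lt_iff_degree_lt hPne]
    refine lt_of_le_of_lt (Polynomial.degree_sum_le _ _) ?_
    rw [Finset.sup_lt_iff (by exact_mod_cast WithBot.bot_lt_coe N)]
    intro β _
    refine lt_of_le_of_lt (Polynomial.degree_C_mul_X_pow_le _ _) ?_
    exact_mod_cast β.isLt
  -- eval representation
  have heval : ∀ s : ℝ, P.eval s = ∑ β : Fin N, v β * s ^ (β:ℕ) := by
    intro s
    rw [hP, Polynomial.eval_finset_sum]
    simp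
  -- roots in each subinterval
  have hroot : ∀ i : Fin N, ∃ r ∈ Set.Ioo (lo + ((i:ℕ):ℝ) * Δ) (lo + ((i:ℕ)+1 : ℝ) * Δ),
      P.eval (r - aa) = 0 := by
    intro i
    apply exists_zero_in_Ioo (p := fun t => P.eval (t - aa))
    · exact (P.continuous_aeval.comp (continuous_id.sub continuous_const)).continuousOn
    · nlinarith
    · have : (∫ t in (lo + ((i:ℕ):ℝ) * Δ)..(lo + ((i:ℕ)+1 : ℝ) * Δ), P.eval (t - aa))
          = ∑ β : Fin N,
            (((lo + ((i:ℕ)+1 : ℝ) * Δ - aa) ^ ((β:ℕ)+1) - (lo + ((i:ℕ):ℝ) * Δ - aa) ^ ((β:ℕ)+1))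
              / (((β:ℕ):ℝ) + 1)) * v β := by
        have h1 : ∀ t : ℝ, P.eval (t - aa) = ∑ β : Fin N, v β * (t - aa) ^ (β:ℕ) :=
          fun t => heval _
        rw [intervalIntegral.integral_congr (fun t _ => h1 t)]
        rw [intervalIntegral.integral_finset_sum]
        · refine Finset.sum_congr rfl fun β _ => ?_
          rw [intervalIntegral.integral_const_mul, moment_eq]
          ring
        · intro β _
          apply ContinuousOn.intervalIntegrable
          exact (continuous_const.mul (((continuous_id.sub continuous_const).pow _))).continuousOn
      rw [this]
      have := congrFun hveq i
      simpa [Matrix.mulVec, dotProduct] using this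
  choose r hr hr0 using hroot
  have hinj : Function.Injective (fun i : Fin N => r i - aa) := by
    have hmono : StrictMono fun i : Fin N => r i - aa := by
      intro i i' hii
      have h1 : r i < lo + ((i:ℕ)+1:ℝ) * Δ := (hr i).2
      have h2 : lo + ((i':ℕ):ℝ) * Δ < r i' := (hr i').1
      have h3 : ((i:ℕ):ℝ) + 1 ≤ ((i':ℕ):ℝ) := by exact_mod_cast hii
      have : lo + ((i:ℕ)+1:ℝ) * Δ ≤ lo + ((i':ℕ):ℝ) * Δ := by nlinarith
      simp only [sub_lt_sub_iff_right]
      linarith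
    exact hmono.injective
  have := Polynomial.eq_zero_of_natDegree_lt_card_of_eval_eq_zero P hinj
    (fun i => hr0 i) (by rwa [Fintype.card_fin])
  exact hPne this


lemma box_integral_prod {n : ℕ} (F : Fin n → ℝ → ℝ) (l u : Fin n → ℝ)
    (hF : ∀ k, Measurable (F k)) :
    ∫ x in Set.Icc l u, ∏ k, F k (x k) = ∏ k, ∫ t in Set.Icc (l k) (u k), F k t := by
  rw [← integral_indicator measurableSet_Icc]
  have hpt : ∀ x : Fin n → ℝ, (Set.Icc l u).indicator (fun x => ∏ k, F k (x k)) x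
      = ∏ k, (Set.Icc (l k) (u k)).indicator (F k) (x k) := by
    intro x
    by_cases hx : x ∈ Set.Icc l u
    · rw [Set.indicator_of_mem hx]
      refine Finset.prod_congr rfl fun k _ => ?_
      rw [Set.indicator_of_mem (Set.mem_Icc.mpr ⟨hx.1 k, hx.2 k⟩)]
    · rw [Set.indicator_of_notMem hx]
      have : ∃ k, x k ∉ Set.Icc (l k) (u k) := by
        by_contra hco
        push_neg at hco
        exact hx (Set.mem_Icc.mpr ⟨fun k => (Set.mem_Icc.mp (hco k)).1, fun k => (Set.mem_Icc.mp (hco k)).2⟩)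
      obtain ⟨k, hk⟩ := this
      rw [eq_comm]
      apply Finset.prod_eq_zero (Finset.mem_univ k)
      rw [Set.indicator_of_notMem hk]
  rw [integral_congr_ae (Filter.Eventually.of_forall hpt)]
  have hfp := MeasureTheory.integral_fintype_prod_eq_prod (μ := fun _ : Fin n => (volume : Measure ℝ))
    (fun k => (Set.Icc (l k) (u k)).indicator (F k))
  rw [← volume_pi] at hfp
  rw [hfp]
  refine Finset.prod_congr rfl fun k _ => ?_
  rw [integral_indicator measurableSet_Icc]

lemma inner_ge (gx m₀ M₀ : ℝ) (h1 : m₀ ≤ gx) (h2 : gx ≤ M₀) :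
    ∫ y in Set.Icc m₀ M₀, (if gx ≤ y then (1:ℝ) else 0) = M₀ - gx := by
  have : (fun y => if gx ≤ y then (1:ℝ) else 0) = (Set.Ici gx).indicator (fun _ => (1:ℝ)) := by
    funext y; simp [Set.indicator, Set.mem_Ici]
  rw [this, MeasureTheory.setIntegral_indicator measurableSet_Ici]
  have hset : Set.Icc m₀ M₀ ∩ Set.Ici gx = Set.Icc gx M₀ := by
    ext y; simp only [Set.mem_inter_iff, Set.mem_Icc, Set.mem_Ici]
    constructor
    · rintro ⟨⟨_, hy2⟩, hy3⟩; exact ⟨hy3, hy2⟩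
    · rintro ⟨hy1, hy2⟩; exact ⟨⟨h1.trans hy1, hy2⟩, hy1⟩
  rw [hset, MeasureTheory.setIntegral_const, measureReal_def, Real.volume_Icc, smul_eq_mul, mul_one,
    ENNReal.toReal_ofReal (by linarith)]

lemma inner_le (gx m₀ M₀ : ℝ) (h1 : m₀ ≤ gx) (h2 : gx ≤ M₀) :
    ∫ y in Set.Icc m₀ M₀, (if y ≤ gx then (1:ℝ) else 0) = gx - m₀ := by
  have : (fun y => if y ≤ gx then (1:ℝ) else 0) = (Set.Iic gx).indicator (fun _ => (1:ℝ)) := by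
    funext y; simp [Set.indicator, Set.mem_Iic]
  rw [this, MeasureTheory.setIntegral_indicator measurableSet_Iic]
  have hset : Set.Icc m₀ M₀ ∩ Set.Iic gx = Set.Icc m₀ gx := by
    ext y; simp only [Set.mem_inter_iff, Set.mem_Icc, Set.mem_Iic]
    constructor
    · rintro ⟨⟨hy1, _⟩, hy3⟩; exact ⟨hy1, hy3⟩
    · rintro ⟨hy1, hy2⟩; exact ⟨⟨hy1, hy2.trans h2⟩, hy2⟩
  rw [hset, MeasureTheory.setIntegral_const, measureReal_def, Real.volume_Icc, smul_eq_mul, mul_one,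
    ENNReal.toReal_ofReal (by linarith)]

lemma sum_ext {n : ℕ} (D Nn : Fin n → ℕ) (hD : ∀ k, D k ≤ Nn k)
    (c₀ : ((k : Fin n) → Fin (D k)) → ℝ) (c : ((k : Fin n) → Fin (Nn k)) → ℝ)
    (hc : ∀ β : (k : Fin n) → Fin (Nn k),
      c β = if h : ∀ k, (β k : ℕ) < D k then c₀ (fun k => ⟨(β k : ℕ), h k⟩) else 0)
    (G : ((k : Fin n) → ℕ) → ℝ) :
    ∑ β : (k : Fin n) → Fin (Nn k), c β * G (fun k => (β k : ℕ))
      = ∑ β : (k : Fin n) → Fin (D k), c₀ β * G (fun k => (β k : ℕ)) := by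
  classical
  set emb : ((k : Fin n) → Fin (D k)) → ((k : Fin n) → Fin (Nn k)) :=
    fun β k => Fin.castLE (hD k) (β k) with hemb
  have hinj : Function.Injective emb := by
    intro β γ h
    funext k
    have := congrFun h k
    exact Fin.castLE_injective (hD k) this
  rw [← Finset.sum_subset (Finset.subset_univ (Finset.univ.image emb))]
  · rw [Finset.sum_image (fun β _ γ _ h => hinj h)]
    refine Finset.sum_congr rfl fun β _ => ?_
    have h1 : ∀ k, ((emb β) k : ℕ) < D k := fun k => by
      simp [hemb]
    rw [hc (emb β), dif_pos h1]
    congr 1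
  · intro β _ hβ
    have : ¬ (∀ k, (β k : ℕ) < D k) := by
      intro hall
      apply hβ
      refine Finset.mem_image.mpr ⟨fun k => ⟨(β k : ℕ), hall k⟩, Finset.mem_univ _, ?_⟩
      funext k
      apply Fin.ext
      simp [hemb]
    rw [hc β, dif_neg this, zero_mul]


lemma piDet : ∀ (n : ℕ) (N : Fin n → ℕ) (m : ∀ k, Matrix (Fin (N k)) (Fin (N k)) ℝ),
    (∀ k, (m k).det ≠ 0) →
    (Matrix.of fun α β : (∀ k, Fin (N k)) => ∏ k, m k (α k) (β k)).det ≠ 0 := by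
  intro n
  induction n with
  | zero =>
    intro N m _
    rw [Matrix.det_unique]
    simp
  | succ n ih =>
    intro N m hm
    set A := m 0
    set B : Matrix (∀ k : Fin n, Fin (N k.succ)) (∀ k : Fin n, Fin (N k.succ)) ℝ :=
      Matrix.of fun α β => ∏ k, m k.succ (α k) (β k) with hB
    have hBdet : B.det ≠ 0 := ih (fun k => N k.succ) (fun k => m k.succ) (fun k => hm k.succ)
    have hsub : (Matrix.of fun α β : (∀ k : Fin (n+1), Fin (N k)) =>
        ∏ k, m k (α k) (β k)).submatrix (Fin.consEquiv (fun k : Fin (n+1) => Fin (N k))) (Fin.consEquiv (fun k : Fin (n+1) => Fin (N k))) = Matrix.kroneckerMap (· * ·) A B := by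
      ext ⟨i, α⟩ ⟨i', β⟩
      simp only [Matrix.submatrix_apply, Matrix.of_apply, Matrix.kroneckerMap_apply,
        Fin.consEquiv_apply]
      rw [Fin.prod_univ_succ]
      simp [hB]
      exact Or.inl rfl
    have : ((Matrix.of fun α β : (∀ k : Fin (n+1), Fin (N k)) =>
        ∏ k, m k (α k) (β k)).submatrix (Fin.consEquiv (fun k : Fin (n+1) => Fin (N k))) (Fin.consEquiv (fun k : Fin (n+1) => Fin (N k)))).det ≠ 0 := by
      rw [hsub, Matrix.det_kronecker]
      exact mul_ne_zero (pow_ne_zero _ (hm 0)) (pow_ne_zero _ hBdet)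
    rwa [Matrix.det_submatrix_equiv_self] at this

lemma mulVec_inj {ι : Type*} [Fintype ι] [DecidableEq ι] (M : Matrix ι ι ℝ)
    (hdet : M.det ≠ 0) {c c' : ι → ℝ} (h : M.mulVec c' = M.mulVec c) : c' = c := by
  have : Function.Injective M.mulVec := by
    rw [Matrix.mulVec_injective_iff_isUnit]
    exact (Matrix.isUnit_iff_isUnit_det M).mpr (isUnit_iff_ne_zero.mpr hdet)
  exact this h


lemma theta_integral {n : ℕ} (f : (Fin n → ℝ) → ℝ → ℝ) (g : (Fin n → ℝ) → ℝ)
    (hgc : Continuous g) (l u : Fin n → ℝ) (m₀ M₀ : ℝ)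
    (hrange : ∀ x ∈ Set.Icc l u, g x ∈ Set.Icc m₀ M₀)
    (σ : Bool)
    (hiff : ∀ x ∈ Set.Icc l u, ∀ y ∈ Set.Icc m₀ M₀,
      ((0 ≤ f x y) ↔ (if σ then g x ≤ y else y ≤ g x))) :
    ∫ p in (Set.Icc l u) ×ˢ (Set.Icc m₀ M₀), (if 0 ≤ f p.1 p.2 then (1:ℝ) else 0)
      = ∫ x in Set.Icc l u, (if σ then M₀ - g x else g x - m₀) := by
  have hms : MeasurableSet ((Set.Icc l u) ×ˢ (Set.Icc m₀ M₀)) :=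
    measurableSet_Icc.prod measurableSet_Icc
  set S : Set ((Fin n → ℝ) × ℝ) :=
    {p | if σ then g p.1 ≤ p.2 else p.2 ≤ g p.1} with hS
  have hSm : MeasurableSet S := by
    cases σ
    · simpa [hS] using measurableSet_le measurable_snd (hgc.measurable.comp measurable_fst)
    · simpa [hS] using measurableSet_le (hgc.measurable.comp measurable_fst) measurable_snd
  have hcong : ∀ p ∈ (Set.Icc l u) ×ˢ (Set.Icc m₀ M₀),
      (if 0 ≤ f p.1 p.2 then (1:ℝ) else 0) = S.indicator (fun _ => (1:ℝ)) p := by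
    rintro ⟨x, y⟩ hp
    have h1 := hiff x hp.1 y hp.2
    rw [Set.indicator_apply]
    have : ((x,y) ∈ S) = (if σ then g x ≤ y else y ≤ g x) := by
      simp [hS]
    by_cases h : 0 ≤ f x y
    · rw [if_pos h, if_pos]
      show (if σ then g x ≤ y else y ≤ g x)
      simpa [hS] using h1.mp h
    · rw [if_neg h, if_neg]
      intro hmem
      apply h
      apply h1.mpr
      simpa [hS, Set.mem_setOf_eq] using hmem
  rw [MeasureTheory.setIntegral_congr_fun hms hcong]
  have hint : IntegrableOn (S.indicator (fun _ => (1:ℝ)))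
      ((Set.Icc l u) ×ˢ (Set.Icc m₀ M₀)) volume := by
    exact Integrable.indicator
      (MeasureTheory.integrableOn_const
        (isCompact_Icc.prod isCompact_Icc).measure_lt_top.ne) hSm
  rw [MeasureTheory.Measure.volume_eq_prod] at hint ⊢
  rw [MeasureTheory.setIntegral_prod _ hint]
  apply MeasureTheory.setIntegral_congr_fun measurableSet_Icc
  intro x hx
  have hr := hrange x hx
  rw [Set.mem_Icc] at hr
  have : ∀ y : ℝ, S.indicator (fun _ => (1:ℝ)) (x, y)
      = (if σ then (if g x ≤ y then (1:ℝ) else 0) else (if y ≤ g x then (1:ℝ) else 0)) := by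
    intro y
    cases σ <;> simp [hS, Set.indicator_apply, Set.mem_setOf_eq]
  simp only [this]
  cases σ
  · simpa using inner_le (g x) m₀ M₀ hr.1 hr.2
  · simpa using inner_ge (g x) m₀ M₀ hr.1 hr.2


lemma core (n : ℕ) (f : (Fin n → ℝ) → ℝ → ℝ) (a ξ η : Fin n → ℝ) (m₀ M₀ : ℝ)
    (D : Fin n → ℕ) (c₀ : ((k : Fin n) → Fin (D k)) → ℝ) (g : (Fin n → ℝ) → ℝ)
    (hg : ∀ x, g x = ∑ β : (k : Fin n) → Fin (D k), c₀ β * ∏ k, (x k - a k) ^ ((β k : ℕ)))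
    (hξη : ∀ k, ξ k < η k)
    (ε : ℝ)
    (hgR : ∀ x ∈ Set.Icc ξ η, g x ∈ Set.Icc m₀ M₀)
    (hIff : (ε = 1 ∧ ∀ x ∈ Set.Icc ξ η, ∀ y ∈ Set.Icc m₀ M₀, (0 ≤ f x y ↔ g x ≤ y))
          ∨ (ε = -1 ∧ ∀ x ∈ Set.Icc ξ η, ∀ y ∈ Set.Icc m₀ M₀, (0 ≤ f x y ↔ y ≤ g x))) :
    ∀ Nn : Fin n → ℕ, (∀ k, 0 < Nn k) → (∀ k, D k ≤ Nn k) →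
        ∀ c : ((k : Fin n) → Fin (Nn k)) → ℝ,
          (∀ β : (k : Fin n) → Fin (Nn k),
            c β = if h : ∀ k, (β k : ℕ) < D k then c₀ (fun k => ⟨(β k : ℕ), h k⟩) else 0) →
          ∀ d : ((k : Fin n) → Fin (Nn k)) → ℝ,
            (∀ α : (k : Fin n) → Fin (Nn k),
              d α = (1 + ε) / 2 *
                  (volume (Set.Icc (fun k => ξ k + ((α k : ℕ) : ℝ) * ((η k - ξ k) / (Nn k : ℝ)))
                    (fun k => ξ k + (((α k : ℕ) : ℝ) + 1) * ((η k - ξ k) / (Nn k : ℝ))))).toReal * M₀ +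
                (1 - ε) / 2 *
                  (volume (Set.Icc (fun k => ξ k + ((α k : ℕ) : ℝ) * ((η k - ξ k) / (Nn k : ℝ)))
                    (fun k => ξ k + (((α k : ℕ) : ℝ) + 1) * ((η k - ξ k) / (Nn k : ℝ))))).toReal * m₀ -
                ε * ∫ p in (Set.Icc (fun k => ξ k + ((α k : ℕ) : ℝ) * ((η k - ξ k) / (Nn k : ℝ)))
                    (fun k => ξ k + (((α k : ℕ) : ℝ) + 1) * ((η k - ξ k) / (Nn k : ℝ)))) ×ˢ Set.Icc m₀ M₀,
                  (if 0 ≤ f p.1 p.2 then (1 : ℝ) else 0)) →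
            (∀ α : (k : Fin n) → Fin (Nn k),
              ∑ β : (k : Fin n) → Fin (Nn k), c β *
                ∏ k, (((ξ k + (((α k : ℕ) : ℝ) + 1) * ((η k - ξ k) / (Nn k : ℝ)) - a k) ^ ((β k : ℕ) + 1) -
                    (ξ k + ((α k : ℕ) : ℝ) * ((η k - ξ k) / (Nn k : ℝ)) - a k) ^ ((β k : ℕ) + 1)) /
                  (((β k : ℕ) : ℝ) + 1)) = d α) ∧
            ∀ c' : ((k : Fin n) → Fin (Nn k)) → ℝ,
              (∀ α : (k : Fin n) → Fin (Nn k),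
                ∑ β : (k : Fin n) → Fin (Nn k), c' β *
                  ∏ k, (((ξ k + (((α k : ℕ) : ℝ) + 1) * ((η k - ξ k) / (Nn k : ℝ)) - a k) ^ ((β k : ℕ) + 1) -
                      (ξ k + ((α k : ℕ) : ℝ) * ((η k - ξ k) / (Nn k : ℝ)) - a k) ^ ((β k : ℕ) + 1)) /
                    (((β k : ℕ) : ℝ) + 1)) = d α) → c' = c := by
  intro Nn hN hD c hc d hd
  classical
  set Δ : Fin n → ℝ := fun k => (η k - ξ k) / (Nn k : ℝ) with hΔdef
  have hΔpos : ∀ k, 0 < Δ k := fun k =>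
    div_pos (sub_pos.mpr (hξη k)) (by exact_mod_cast hN k)
  set lo : ((k : Fin n) → Fin (Nn k)) → (Fin n → ℝ) :=
    fun α k => ξ k + ((α k : ℕ) : ℝ) * Δ k with hlodef
  set hi : ((k : Fin n) → Fin (Nn k)) → (Fin n → ℝ) :=
    fun α k => ξ k + (((α k : ℕ) : ℝ) + 1) * Δ k with hhidef
  have hlohi : ∀ α, lo α ≤ hi α := by
    intro α k
    simp only [hlodef, hhidef]
    nlinarith [hΔpos k]
  have hcell_sub : ∀ α, Set.Icc (lo α) (hi α) ⊆ Set.Icc ξ η := by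
    intro α x hx
    rw [Set.mem_Icc] at hx ⊢
    constructor
    · intro k
      have h1 : ξ k ≤ lo α k := by
        simp only [hlodef]
        have hge : (0:ℝ) ≤ ((α k : ℕ) : ℝ) := Nat.cast_nonneg _
        nlinarith [hΔpos k]
      exact h1.trans (hx.1 k)
    · intro k
      have h1 : hi α k ≤ η k := by
        simp only [hhidef, hΔdef]
        have hcast : (0:ℝ) < (Nn k : ℝ) := by exact_mod_cast hN k
        have hle : ((α k : ℕ) : ℝ) + 1 ≤ (Nn k : ℝ) := by
          exact_mod_cast (α k).isLt
        have : (((α k : ℕ) : ℝ) + 1) * ((η k - ξ k) / (Nn k : ℝ))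
            ≤ (Nn k : ℝ) * ((η k - ξ k) / (Nn k : ℝ)) := by
          apply mul_le_mul_of_nonneg_right hle (le_of_lt (hΔpos k))
        have h2 : (Nn k : ℝ) * ((η k - ξ k) / (Nn k : ℝ)) = η k - ξ k := by
          field_simp
        linarith
      exact (hx.2 k).trans h1
  -- continuity of g
  have hgcont : Continuous g := by
    have : g = fun x => ∑ β : (k : Fin n) → Fin (D k), c₀ β * ∏ k, (x k - a k) ^ ((β k : ℕ)) :=
      funext hg
    rw [this]
    exact continuous_finset_sum _ fun β _ => continuous_const.mul
      (continuous_finset_prod _ fun k _ => ((continuous_apply k).sub continuous_const).pow _)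
  -- the matrices
  set m1 : (k : Fin n) → Matrix (Fin (Nn k)) (Fin (Nn k)) ℝ := fun k =>
    Matrix.of fun i j =>
      ((ξ k + ((i:ℕ)+1 : ℝ) * Δ k - a k) ^ ((j:ℕ)+1) - (ξ k + ((i:ℕ) : ℝ) * Δ k - a k) ^ ((j:ℕ)+1))
        / (((j:ℕ) : ℝ) + 1) with hm1
  set Mmat : Matrix ((k : Fin n) → Fin (Nn k)) ((k : Fin n) → Fin (Nn k)) ℝ :=
    Matrix.of fun α β => ∏ k, m1 k (α k) (β k) with hMmat
  have hdet : Mmat.det ≠ 0 :=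
    piDet n Nn m1 (fun k => oneD_det (a k) (ξ k) (Δ k) (hΔpos k))
  -- identification of the system LHS with mulVec
  have hsys : ∀ (w : ((k : Fin n) → Fin (Nn k)) → ℝ) (α : (k : Fin n) → Fin (Nn k)),
      (∑ β : (k : Fin n) → Fin (Nn k), w β *
        ∏ k, (((ξ k + (((α k : ℕ) : ℝ) + 1) * ((η k - ξ k) / (Nn k : ℝ)) - a k) ^ ((β k : ℕ) + 1) -
            (ξ k + ((α k : ℕ) : ℝ) * ((η k - ξ k) / (Nn k : ℝ)) - a k) ^ ((β k : ℕ) + 1)) /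
          (((β k : ℕ) : ℝ) + 1))) = Mmat.mulVec w α := by
    intro w α
    rw [Matrix.mulVec, dotProduct]
    refine Finset.sum_congr rfl fun β _ => ?_
    rw [mul_comm]
    rfl
  -- moments as integrals
  have hmom : ∀ (k : Fin n) (i j : Fin (Nn k)),
      m1 k i j = ∫ t in Set.Icc (ξ k + ((i:ℕ):ℝ) * Δ k) (ξ k + (((i:ℕ):ℝ)+1) * Δ k),
        (t - a k) ^ (j:ℕ) := by
    intro k i j
    rw [MeasureTheory.integral_Icc_eq_integral_Ioc,
      ← intervalIntegral.integral_of_le (by nlinarith [hΔpos k]), moment_eq]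
    rfl
  -- Mmat entries as box integrals
  have hMbox : ∀ α β, Mmat α β = ∫ x in Set.Icc (lo α) (hi α), ∏ k, (x k - a k) ^ ((β k : ℕ)) := by
    intro α β
    show (∏ k, m1 k (α k) (β k)) = _
    rw [box_integral_prod (fun k t => (t - a k) ^ ((β k : ℕ))) (lo α) (hi α)
      (fun k => ((measurable_id.sub measurable_const).pow measurable_const))]
    refine Finset.prod_congr rfl fun k _ => ?_
    rw [hmom k (α k) (β k)]
  -- integrability of monomials and g on cells
  have hmono_int : ∀ (α) (β : (k : Fin n) → Fin (Nn k)),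
      IntegrableOn (fun x : Fin n → ℝ => ∏ k, (x k - a k) ^ ((β k : ℕ)))
        (Set.Icc (lo α) (hi α)) volume := by
    intro α β
    apply ContinuousOn.integrableOn_compact isCompact_Icc
    exact (continuous_finset_prod _ fun k _ =>
      ((continuous_apply k).sub continuous_const).pow _).continuousOn
  -- mulVec c = cell integrals of g
  have hMv : ∀ α, Mmat.mulVec c α = ∫ x in Set.Icc (lo α) (hi α), g x := by
    intro α
    rw [Matrix.mulVec, dotProduct]
    have step1 : ∀ β, Mmat α β * c β
        = c β * ∫ x in Set.Icc (lo α) (hi α), ∏ k, (x k - a k) ^ ((β k : ℕ)) := by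
      intro β
      rw [mul_comm, hMbox α β]
    rw [Finset.sum_congr rfl fun β _ => step1 β]
    have step2 : ∀ β, c β * (∫ x in Set.Icc (lo α) (hi α), ∏ k, (x k - a k) ^ ((β k : ℕ)))
        = ∫ x in Set.Icc (lo α) (hi α), c β * ∏ k, (x k - a k) ^ ((β k : ℕ)) := by
      intro β
      rw [MeasureTheory.integral_const_mul]
    rw [Finset.sum_congr rfl fun β _ => step2 β,
      ← MeasureTheory.integral_finset_sum _ (fun β _ => ((hmono_int α β).const_mul (c β)))]
    apply MeasureTheory.setIntegral_congr_fun measurableSet_Icc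
    intro x _
    rw [hg x]
    exact sum_ext D Nn hD c₀ c hc (fun e => ∏ k, (x k - a k) ^ (e k))
  -- d equals cell integrals of g
  have hdg : ∀ α, d α = ∫ x in Set.Icc (lo α) (hi α), g x := by
    intro α
    have hrange' : ∀ x ∈ Set.Icc (lo α) (hi α), g x ∈ Set.Icc m₀ M₀ :=
      fun x hx => hgR x (hcell_sub α hx)
    have hgint : IntegrableOn g (Set.Icc (lo α) (hi α)) volume :=
      ContinuousOn.integrableOn_compact isCompact_Icc hgcont.continuousOn
    have hconst : ∀ r : ℝ, IntegrableOn (fun _ : Fin n → ℝ => r) (Set.Icc (lo α) (hi α)) volume :=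
      fun r => MeasureTheory.integrableOn_const isCompact_Icc.measure_lt_top.ne
    have hd' : d α = (1+ε)/2 * (volume (Set.Icc (lo α) (hi α))).toReal * M₀
        + (1-ε)/2 * (volume (Set.Icc (lo α) (hi α))).toReal * m₀
        - ε * ∫ p in (Set.Icc (lo α) (hi α)) ×ˢ Set.Icc m₀ M₀,
            (if 0 ≤ f p.1 p.2 then (1:ℝ) else 0) := hd α
    have hconst_int : ∫ x in Set.Icc (lo α) (hi α), (fun _ : Fin n → ℝ => (1:ℝ)) x = 1 *
        (volume (Set.Icc (lo α) (hi α))).toReal := by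
      rw [MeasureTheory.setIntegral_const]
      simp [mul_comm, measureReal_def]
    rcases hIff with ⟨hε, hiff⟩ | ⟨hε, hiff⟩
    · subst hε
      have htheta := theta_integral f g hgcont (lo α) (hi α) m₀ M₀ hrange' true
        (fun x hx y hy => by simpa using hiff x (hcell_sub α hx) y hy)
      simp only [if_true] at htheta
      have hsplit : ∫ x in Set.Icc (lo α) (hi α), (M₀ - g x)
          = (volume (Set.Icc (lo α) (hi α))).toReal * M₀ - ∫ x in Set.Icc (lo α) (hi α), g x := by
        rw [MeasureTheory.integral_sub (hconst M₀) hgint, MeasureTheory.setIntegral_const,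
          measureReal_def, smul_eq_mul]
      rw [hd', htheta, hsplit]
      ring
    · subst hε
      have htheta := theta_integral f g hgcont (lo α) (hi α) m₀ M₀ hrange' false
        (fun x hx y hy => by simpa using hiff x (hcell_sub α hx) y hy)
      simp only [Bool.false_eq_true, if_false] at htheta
      have hsplit : ∫ x in Set.Icc (lo α) (hi α), (g x - m₀)
          = (∫ x in Set.Icc (lo α) (hi α), g x) - (volume (Set.Icc (lo α) (hi α))).toReal * m₀ := by
        rw [MeasureTheory.integral_sub hgint (hconst m₀), MeasureTheory.setIntegral_const,
          measureReal_def, smul_eq_mul]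
      rw [hd', htheta, hsplit]
      ring
  constructor
  · intro α
    rw [hsys c α, hMv α]
    exact (hdg α).symm
  · intro c' hc'
    apply mulVec_inj Mmat hdet
    funext α
    rw [← hsys c' α, hc' α, hdg α, ← hMv α]


lemma setup (n : ℕ) (f : (Fin n → ℝ) → ℝ → ℝ) (a : Fin n → ℝ) (b : ℝ)
    (hf : ContDiffAt ℝ 1 (fun p : (Fin n → ℝ) × ℝ => f p.1 p.2) (a, b))
    (g : (Fin n → ℝ) → ℝ) (hgc : Continuous g) (hgb : g a = b)
    (hgf : ∀ᶠ x in nhds a, f x (g x) = 0)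
    (hdpos : 0 < deriv (fun y => f a y) b) :
    ∃ (ξ η : Fin n → ℝ) (m₀ M₀ : ℝ), (∀ k, ξ k < η k) ∧ m₀ < M₀ ∧
      a ∈ Set.Icc ξ η ∧ b ∈ Set.Icc m₀ M₀ ∧
      (∀ x ∈ Set.Icc ξ η, g x ∈ Set.Icc m₀ M₀) ∧
      (∀ x ∈ Set.Icc ξ η, f x (g x) = 0) ∧
      (∀ x ∈ Set.Icc ξ η, StrictMonoOn (f x) (Set.Icc m₀ M₀)) := by
  classical
  set F : (Fin n → ℝ) × ℝ → ℝ := fun p => f p.1 p.2 with hF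
  obtain ⟨u, hu, hcd⟩ := hf.contDiffOn (le_refl 1) (by simp)
  obtain ⟨t, htu, hto, htm⟩ := mem_nhds_iff.mp hu
  have hcdt : ContDiffOn ℝ 1 F t := hcd.mono htu
  have hdiff : ∀ p ∈ t, HasFDerivAt F (fderiv ℝ F p) p := by
    intro p hp
    have h1 : DifferentiableOn ℝ F t := hcdt.differentiableOn one_ne_zero
    exact ((h1 p hp).differentiableAt (hto.mem_nhds hp)).hasFDerivAt
  have hcont_deriv : ContinuousOn (fun p => fderiv ℝ F p ((0 : Fin n → ℝ), (1:ℝ))) t := by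
    have h1 := hcdt.continuousOn_fderiv_of_isOpen hto (le_refl 1)
    exact (ContinuousLinearMap.apply ℝ ℝ ((0 : Fin n → ℝ), (1:ℝ))).continuous.comp_continuousOn h1
  have hslice : ∀ x y, (x, y) ∈ t →
      HasDerivAt (fun y' => f x y') (fderiv ℝ F (x,y) ((0 : Fin n → ℝ), (1:ℝ))) y := by
    intro x y hp
    have hj : HasDerivAt (fun y' : ℝ => ((x, y') : (Fin n → ℝ) × ℝ))
        ((0 : Fin n → ℝ), (1:ℝ)) y := (hasDerivAt_const y x).prodMk (hasDerivAt_id y)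
    have := (hdiff _ hp).comp_hasDerivAt y hj
    exact this
  have hL : 0 < fderiv ℝ F (a,b) ((0 : Fin n → ℝ), (1:ℝ)) := by
    have := (hslice a b htm).deriv
    rwa [← this]
  -- open set where the partial derivative is positive
  set V : Set ((Fin n → ℝ) × ℝ) :=
    t ∩ (fun p => fderiv ℝ F p ((0 : Fin n → ℝ), (1:ℝ))) ⁻¹' (Set.Ioi 0) with hV
  have hVo : IsOpen V := hcont_deriv.isOpen_inter_preimage hto isOpen_Ioi
  have hVmem : (a, b) ∈ V := ⟨htm, hL⟩
  obtain ⟨r, hr, hrb⟩ := Metric.isOpen_iff.mp hVo _ hVmem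
  set δ : ℝ := r / 2 with hδdef
  have hδ : 0 < δ := by positivity
  have hcb : Metric.closedBall (a, b) δ ⊆ V :=
    le_trans (Metric.closedBall_subset_ball (by rw [hδdef]; linarith)) hrb
  -- x-neighborhood
  have hWnhds : {x | f x (g x) = 0} ∩ g ⁻¹' (Metric.closedBall b δ) ∈ nhds a := by
    apply Filter.inter_mem hgf
    apply hgc.continuousAt.preimage_mem_nhds
    rw [hgb]
    exact Metric.closedBall_mem_nhds b hδ
  obtain ⟨r₂, hr₂, hr₂b⟩ := Metric.mem_nhds_iff.mp hWnhds
  set δ₂ : ℝ := min (r₂ / 2) δ with hδ₂def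
  have hδ₂ : 0 < δ₂ := lt_min (by positivity) hδ
  have hδ₂δ : δ₂ ≤ δ := min_le_right _ _
  have hcb₂ : Metric.closedBall a δ₂ ⊆ {x | f x (g x) = 0} ∩ g ⁻¹' (Metric.closedBall b δ) := by
    refine le_trans (Metric.closedBall_subset_ball ?_) hr₂b
    calc δ₂ ≤ r₂ / 2 := min_le_left _ _
    _ < r₂ := by linarith
  refine ⟨fun k => a k - δ₂, fun k => a k + δ₂, b - δ, b + δ,
    fun k => by show a k - δ₂ < a k + δ₂; linarith, by linarith, ?_, ?_, ?_, ?_, ?_⟩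
  · rw [Set.mem_Icc]
    constructor <;> intro k <;> simp <;> linarith
  · rw [Set.mem_Icc]; constructor <;> linarith
  all_goals {
    have hxball : ∀ x : Fin n → ℝ, x ∈ Set.Icc (fun k => a k - δ₂) (fun k => a k + δ₂) →
        dist x a ≤ δ₂ := by
      intro x hx
      rw [Set.mem_Icc] at hx
      rw [dist_pi_le_iff hδ₂.le]
      intro k
      rw [Real.dist_eq, abs_le]
      constructor
      · have := hx.1 k; simp at this; linarith
      · have := hx.2 k; simp at this; linarith
    have hxW : ∀ x : Fin n → ℝ, x ∈ Set.Icc (fun k => a k - δ₂) (fun k => a k + δ₂) →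
        f x (g x) = 0 ∧ g x ∈ Metric.closedBall b δ := by
      intro x hx
      have := hcb₂ (Metric.mem_closedBall.mpr (hxball x hx))
      exact ⟨this.1, this.2⟩
    have hxyV : ∀ x : Fin n → ℝ, x ∈ Set.Icc (fun k => a k - δ₂) (fun k => a k + δ₂) →
        ∀ y ∈ Set.Icc (b - δ) (b + δ), (x, y) ∈ V := by
      intro x hx y hy
      apply hcb
      rw [Metric.mem_closedBall, Prod.dist_eq]
      apply max_le ((hxball x hx).trans hδ₂δ)
      rw [Set.mem_Icc] at hy
      rw [Real.dist_eq, abs_le]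
      constructor <;> linarith [hy.1, hy.2]
    first
    | -- g maps into I
      (intro x hx
       have := (hxW x hx).2
       rw [Metric.mem_closedBall, Real.dist_eq, abs_le] at this
       rw [Set.mem_Icc]
       constructor <;> linarith [this.1, this.2])
    | -- f x (g x) = 0
      (intro x hx; exact (hxW x hx).1)
    | -- strict mono
      (intro x hx
       apply strictMonoOn_of_deriv_pos (convex_Icc _ _)
       · intro y hy
         have hmem := hxyV x hx y hy
         have : ContinuousAt (fun y' => f x y') y := (hslice x y hmem.1).continuousAt
         exact this.continuousWithinAt
       · intro y hy
         rw [interior_Icc] at hy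
         have hmem := hxyV x hx y (Set.Ioo_subset_Icc_self hy)
         rw [(hslice x y hmem.1).deriv]
         exact hmem.2)
  }


/-- If `f` is C¹ near `(a,b)`, `f(a,b) = 0`, `∂_y f(a,b) ≠ 0`, and the
implicit function `g` (with `g a = b`, `f(x, g x) = 0` near `a`) is a multivariate
polynomial `g x = Σ_{0 ≤ β < D} c₀ β (x−a)^β`, then there is a compact rectangle
`R × I ∋ (a,b)` satisfying Assumption 1 with constant sign `ε`, and, for every grid
partition with `N_k` exceeding the degree of `g` in `x_k`, the (zero-extended)
coefficients are the unique solution of the linear system with data `d α` computed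
from `f` via the Heaviside integrals. -/
theorem statement6 (n : ℕ) (f : (Fin n → ℝ) → ℝ → ℝ)
    (a : Fin n → ℝ) (b : ℝ)
    (hf : ContDiffAt ℝ 1 (fun p : (Fin n → ℝ) × ℝ => f p.1 p.2) (a, b))
    (hfab : f a b = 0)
    (hdy : deriv (fun y => f a y) b ≠ 0)
    (D : Fin n → ℕ) (c₀ : ((k : Fin n) → Fin (D k)) → ℝ)
    (g : (Fin n → ℝ) → ℝ)
    (hg : ∀ x, g x = ∑ β : (k : Fin n) → Fin (D k), c₀ β * ∏ k, (x k - a k) ^ ((β k : ℕ)))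
    (hgb : g a = b)
    (hgf : ∀ᶠ x in nhds a, f x (g x) = 0) :
    ∃ (ξ η : Fin n → ℝ) (m₀ M₀ : ℝ) (ε : ℝ) (y₀ : (Fin n → ℝ) → ℝ),
      a ∈ Icc ξ η ∧ b ∈ Icc m₀ M₀ ∧
      ((ε = 1 ∧ ∀ x ∈ Icc ξ η, y₀ x ∈ Icc m₀ M₀ ∧
          (∀ y ∈ Icc m₀ M₀, y < y₀ x → f x y < 0) ∧ (∀ y ∈ Icc m₀ M₀, y₀ x < y → 0 < f x y)) ∨
       (ε = -1 ∧ ∀ x ∈ Icc ξ η, y₀ x ∈ Icc m₀ M₀ ∧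
          (∀ y ∈ Icc m₀ M₀, y < y₀ x → 0 < f x y) ∧ (∀ y ∈ Icc m₀ M₀, y₀ x < y → f x y < 0))) ∧
      ∀ Nn : Fin n → ℕ, (∀ k, 0 < Nn k) → (∀ k, D k ≤ Nn k) →
        ∀ c : ((k : Fin n) → Fin (Nn k)) → ℝ,
          (∀ β : (k : Fin n) → Fin (Nn k),
            c β = if h : ∀ k, (β k : ℕ) < D k then c₀ (fun k => ⟨(β k : ℕ), h k⟩) else 0) →
          ∀ d : ((k : Fin n) → Fin (Nn k)) → ℝ,
            (∀ α : (k : Fin n) → Fin (Nn k),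
              d α = (1 + ε) / 2 *
                  (volume (Icc (fun k => ξ k + ((α k : ℕ) : ℝ) * ((η k - ξ k) / (Nn k : ℝ)))
                    (fun k => ξ k + (((α k : ℕ) : ℝ) + 1) * ((η k - ξ k) / (Nn k : ℝ))))).toReal * M₀ +
                (1 - ε) / 2 *
                  (volume (Icc (fun k => ξ k + ((α k : ℕ) : ℝ) * ((η k - ξ k) / (Nn k : ℝ)))
                    (fun k => ξ k + (((α k : ℕ) : ℝ) + 1) * ((η k - ξ k) / (Nn k : ℝ))))).toReal * m₀ -
                ε * ∫ p in (Icc (fun k => ξ k + ((α k : ℕ) : ℝ) * ((η k - ξ k) / (Nn k : ℝ)))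
                    (fun k => ξ k + (((α k : ℕ) : ℝ) + 1) * ((η k - ξ k) / (Nn k : ℝ)))) ×ˢ Icc m₀ M₀,
                  (if 0 ≤ f p.1 p.2 then (1 : ℝ) else 0)) →
            (∀ α : (k : Fin n) → Fin (Nn k),
              ∑ β : (k : Fin n) → Fin (Nn k), c β *
                ∏ k, (((ξ k + (((α k : ℕ) : ℝ) + 1) * ((η k - ξ k) / (Nn k : ℝ)) - a k) ^ ((β k : ℕ) + 1) -
                    (ξ k + ((α k : ℕ) : ℝ) * ((η k - ξ k) / (Nn k : ℝ)) - a k) ^ ((β k : ℕ) + 1)) /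
                  (((β k : ℕ) : ℝ) + 1)) = d α) ∧
            ∀ c' : ((k : Fin n) → Fin (Nn k)) → ℝ,
              (∀ α : (k : Fin n) → Fin (Nn k),
                ∑ β : (k : Fin n) → Fin (Nn k), c' β *
                  ∏ k, (((ξ k + (((α k : ℕ) : ℝ) + 1) * ((η k - ξ k) / (Nn k : ℝ)) - a k) ^ ((β k : ℕ) + 1) -
                      (ξ k + ((α k : ℕ) : ℝ) * ((η k - ξ k) / (Nn k : ℝ)) - a k) ^ ((β k : ℕ) + 1)) /
                    (((β k : ℕ) : ℝ) + 1)) = d α) → c' = c := by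
  classical
  have hgcont : Continuous g := by
    have hrepr : g = fun x => ∑ β : (k : Fin n) → Fin (D k), c₀ β * ∏ k, (x k - a k) ^ ((β k : ℕ)) :=
      funext hg
    rw [hrepr]
    exact continuous_finset_sum _ fun β _ => continuous_const.mul
      (continuous_finset_prod _ fun k _ => ((continuous_apply k).sub continuous_const).pow _)
  rcases lt_or_gt_of_ne hdy with hneg | hpos
  · -- ∂_y f (a,b) < 0 : apply setup to -f
    have hf' : ContDiffAt ℝ 1
        (fun p : (Fin n → ℝ) × ℝ => (fun x y => -f x y) p.1 p.2) (a, b) := hf.neg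
    have hd' : 0 < deriv (fun y => -f a y) b := by
      have heq : deriv (fun y => -f a y) b = -deriv (fun y => f a y) b := by
        exact deriv.neg
      rw [heq]; linarith
    obtain ⟨ξ, η, m₀, M₀, hξη, hmM, haR, hbI, hgR, hfg0, hmono⟩ :=
      setup n (fun x y => -f x y) a b hf' g hgcont hgb
        (hgf.mono fun x hx => by show -f x (g x) = 0; rw [hx, neg_zero]) hd'
    have hfg0' : ∀ x ∈ Set.Icc ξ η, f x (g x) = 0 := by
      intro x hx
      have h0 : -f x (g x) = 0 := hfg0 x hx
      linarith
    have hsign : ∀ x ∈ Set.Icc ξ η, g x ∈ Set.Icc m₀ M₀ ∧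
        (∀ y ∈ Set.Icc m₀ M₀, y < g x → 0 < f x y) ∧
        (∀ y ∈ Set.Icc m₀ M₀, g x < y → f x y < 0) := by
      intro x hx
      refine ⟨hgR x hx, ?_, ?_⟩
      · intro y hy hlt
        have h1 : -f x y < -f x (g x) := hmono x hx hy (hgR x hx) hlt
        have h0 : f x (g x) = 0 := hfg0' x hx
        linarith
      · intro y hy hlt
        have h1 : -f x (g x) < -f x y := hmono x hx (hgR x hx) hy hlt
        have h0 : f x (g x) = 0 := hfg0' x hx
        linarith
    have hIff' : ∀ x ∈ Set.Icc ξ η, ∀ y ∈ Set.Icc m₀ M₀, (0 ≤ f x y ↔ y ≤ g x) := by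
      intro x hx y hy
      constructor
      · intro h0
        by_contra hgt
        push_neg at hgt
        have := (hsign x hx).2.2 y hy hgt
        linarith
      · intro hle
        rcases lt_or_eq_of_le hle with hlt | heq
        · exact ((hsign x hx).2.1 y hy hlt).le
        · rw [heq, hfg0' x hx]
    refine ⟨ξ, η, m₀, M₀, -1, g, haR, hbI, Or.inr ⟨rfl, hsign⟩, ?_⟩
    exact core n f a ξ η m₀ M₀ D c₀ g hg hξη (-1) hgR (Or.inr ⟨rfl, hIff'⟩)
  · -- ∂_y f (a,b) > 0
    obtain ⟨ξ, η, m₀, M₀, hξη, hmM, haR, hbI, hgR, hfg0, hmono⟩ :=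
      setup n f a b hf g hgcont hgb hgf hpos
    have hsign : ∀ x ∈ Set.Icc ξ η, g x ∈ Set.Icc m₀ M₀ ∧
        (∀ y ∈ Set.Icc m₀ M₀, y < g x → f x y < 0) ∧
        (∀ y ∈ Set.Icc m₀ M₀, g x < y → 0 < f x y) := by
      intro x hx
      refine ⟨hgR x hx, ?_, ?_⟩
      · intro y hy hlt
        have h1 : f x y < f x (g x) := hmono x hx hy (hgR x hx) hlt
        have h0 : f x (g x) = 0 := hfg0 x hx
        linarith
      · intro y hy hlt
        have h1 : f x (g x) < f x y := hmono x hx (hgR x hx) hy hlt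
        have h0 : f x (g x) = 0 := hfg0 x hx
        linarith
    have hIff' : ∀ x ∈ Set.Icc ξ η, ∀ y ∈ Set.Icc m₀ M₀, (0 ≤ f x y ↔ g x ≤ y) := by
      intro x hx y hy
      constructor
      · intro h0
        by_contra hgt
        push_neg at hgt
        have := (hsign x hx).2.1 y hy hgt
        linarith
      · intro hle
        rcases lt_or_eq_of_le hle with hlt | heq
        · exact ((hsign x hx).2.2 y hy hlt).le
        · rw [← heq, hfg0 x hx]
    refine ⟨ξ, η, m₀, M₀, 1, g, haR, hbI, Or.inl ⟨rfl, hsign⟩, ?_⟩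
    exact core n f a ξ η m₀ M₀ D c₀ g hg hξη 1 hgR (Or.inl ⟨rfl, hIff'⟩)
end

section
/- Let f = (f₁,…,f_m) : ℝ^n × ℝ^m → ℝ^m be continuously differentiable near (a,b) with f(a,b) = 0, let i ∈ {1,…,m} with ∂_{y_m} f_i(a,b) ≠ 0, and let h be a continuously differentiable function of (x, y₁,…,y_{m−1}) defined near (a, b₁,…,b_{m−1}) with h(a, b₁,…,b_{m−1}) = b_m and f_i(x, y₁,…,y_{m−1}, h(x, y₁,…,y_{m−1})) = 0 identically near that point. Define f^{[1]} : ℝ^{n+m−1} → ℝ^{m−1} whose components are f_j(x, y₁,…,y_{m−1}, h(x, y₁,…,y_{m−1})) for j ∈ {1,…,m} \ {i} in increasing order of j. Then det J_{f^{[1]},(y₁,…,y_{m−1})}(a, b₁,…,b_{m−1}) = ((−1)^{i+m} / ∂_{y_m} f_i(a,b)) · det J_{f,y}(a,b); in particular, if det J_{f,y}(a,b) ≠ 0 then det J_{f^{[1]},(y₁,…,y_{m−1})}(a, b₁,…,b_{m−1}) ≠ 0. -/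
open Set

private theorem statement11_la (m : ℕ) (J : Matrix (Fin (m+1)) (Fin (m+1)) ℝ) (i : Fin (m+1))
    (hc0 : J i (Fin.last m) ≠ 0)
    (J1 : Matrix (Fin m) (Fin m) ℝ)
    (hJ1 : ∀ j k, J1 j k = J (i.succAbove j) k.castSucc
      - J (i.succAbove j) (Fin.last m) * (J i k.castSucc / J i (Fin.last m))) :
    J.det = (-1 : ℝ)^((i:ℕ)+m) * J i (Fin.last m) * J1.det := by
  set c := J i (Fin.last m) with hc
  set E : Matrix (Fin (m+1)) (Fin (m+1)) ℝ :=
    fun r s => if r = s then 1 else if r = Fin.last m then -(J i s / c) else 0 with hE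
  have hEdet : E.det = 1 := by
    rw [Matrix.det_of_lowerTriangular E]
    · simp [hE]
    · intro r s hrs
      simp only [hE]
      rw [if_neg, if_neg]
      · exact fun hr => absurd (hr ▸ hrs) (by simp [Fin.le_last, not_lt.2 (Fin.le_last s)])
      · exact fun hr => (lt_irrefl _ (hr ▸ hrs)).elim
  have hJE : ∀ r : Fin (m+1), ∀ k : Fin m,
      (J * E) r k.castSucc = J r k.castSucc - J r (Fin.last m) * (J i k.castSucc / c) := by
    intro r k
    have hk : k.castSucc ≠ Fin.last m := (Fin.castSucc_lt_last k).ne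
    rw [Matrix.mul_apply]
    rw [Finset.sum_eq_add_of_mem k.castSucc (Fin.last m) (Finset.mem_univ _) (Finset.mem_univ _) hk ?_]
    · simp [hE, hk, hk.symm]; ring
    · intro t _ ht
      simp only [hE]
      rw [if_neg (fun e => ht.1 e), if_neg (fun e => ht.2 e), mul_zero]
  have hJElast : ∀ r : Fin (m+1), (J * E) r (Fin.last m) = J r (Fin.last m) := by
    intro r
    rw [Matrix.mul_apply, Finset.sum_eq_single (Fin.last m)]
    · simp [hE]
    · intro t _ ht; simp [hE, ht]
    · simp
  have hrow : ∀ k : Fin m, (J * E) i k.castSucc = 0 := by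
    intro k
    rw [hJE, ← hc]
    field_simp; ring
  have hdet : (J * E).det = J.det := by rw [Matrix.det_mul, hEdet, mul_one]
  rw [← hdet, Matrix.det_succ_row (J * E) i]
  rw [Finset.sum_eq_single (Fin.last m)]
  · have hsub : (J * E).submatrix i.succAbove (Fin.last m).succAbove = J1 := by
      ext j k
      rw [Fin.succAbove_last, Matrix.submatrix_apply, hJE, hJ1]
    rw [hsub, hJElast, ← hc, Fin.val_last]
  · intro t _ ht
    obtain ⟨k, rfl⟩ := Fin.exists_castSucc_eq.mpr ht
    rw [hrow]; ring
  · simp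


/-- Eliminating the last dependent variable `y_m` using the `i`-th
equation (solved by `h`) multiplies the Jacobian determinant with respect to the
remaining dependent variables by `(−1)^{i+m} / ∂_{y_m} f_i(a,b)`; in particular
non-degeneracy is preserved.  (Here the `m+1` dependent variables are indexed by
`Fin (m+1)`, the last one being `Fin.last m`, and `f^{[1]}` has components
`f_j(x, y', h(x,y'))` for `j ≠ i` in increasing order, via `i.succAbove`.) -/
theorem statement11 (n m : ℕ)
    (f : (Fin n → ℝ) → (Fin (m + 1) → ℝ) → Fin (m + 1) → ℝ)
    (a : Fin n → ℝ) (b : Fin (m + 1) → ℝ)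
    (hf : ContDiffAt ℝ 1 (fun p : (Fin n → ℝ) × (Fin (m + 1) → ℝ) => f p.1 p.2) (a, b))
    (hfab : f a b = 0)
    (i : Fin (m + 1))
    (J : Matrix (Fin (m + 1)) (Fin (m + 1)) ℝ)
    (hJ : ∀ i' j : Fin (m + 1), J i' j = fderiv ℝ (fun y => f a y i') b (Pi.single j 1))
    (hi : J i (Fin.last m) ≠ 0)
    (h : (Fin n → ℝ) → (Fin m → ℝ) → ℝ)
    (hh : ContDiffAt ℝ 1 (fun p : (Fin n → ℝ) × (Fin m → ℝ) => h p.1 p.2)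
      (a, fun k => b k.castSucc))
    (hhb : h a (fun k => b k.castSucc) = b (Fin.last m))
    (hfh : ∀ᶠ p : (Fin n → ℝ) × (Fin m → ℝ) in nhds (a, fun k => b k.castSucc),
      f p.1 (Fin.snoc p.2 (h p.1 p.2)) i = 0)
    (J1 : Matrix (Fin m) (Fin m) ℝ)
    (hJ1 : ∀ j k : Fin m, J1 j k =
      fderiv ℝ (fun y' : Fin m → ℝ => f a (Fin.snoc y' (h a y')) (i.succAbove j))
        (fun k => b k.castSucc) (Pi.single k 1)) :
    J1.det = ((-1 : ℝ) ^ ((i : ℕ) + m) / J i (Fin.last m)) * J.det ∧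
      (J.det ≠ 0 → J1.det ≠ 0) := by
  set b' : Fin m → ℝ := fun k => b k.castSucc with hb'
  have hF : DifferentiableAt ℝ (fun p : (Fin n → ℝ) × (Fin (m+1) → ℝ) => f p.1 p.2) (a, b) :=
    hf.differentiableAt one_ne_zero
  have hfa : DifferentiableAt ℝ (fun y => f a y) b :=
    hF.comp b ((differentiableAt_const a).prodMk differentiableAt_id)
  have hfac : ∀ i' : Fin (m+1), DifferentiableAt ℝ (fun y => f a y i') b :=
    fun i' => differentiableAt_pi.mp hfa i'
  have hha : DifferentiableAt ℝ (fun y' => h a y') b' :=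
    (hh.differentiableAt one_ne_zero).comp b' ((differentiableAt_const a).prodMk differentiableAt_id)
  set Dh := fderiv ℝ (fun y' => h a y') b' with hDh
  set d : Fin m → ℝ := fun k => Dh (Pi.single k 1) with hd
  set Dψ : (Fin m → ℝ) →L[ℝ] (Fin (m+1) → ℝ) :=
    ContinuousLinearMap.pi (fun j =>
      Fin.lastCases (motive := fun _ => (Fin m → ℝ) →L[ℝ] ℝ) Dh
        (fun q => ContinuousLinearMap.proj q) j) with hDψ
  have hψ : HasFDerivAt (fun y' : Fin m → ℝ => Fin.snoc y' (h a y') : (Fin m → ℝ) → Fin (m+1) → ℝ)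
      Dψ b' := by
    rw [hDψ, hasFDerivAt_pi]
    intro j
    induction j using Fin.lastCases with
    | last =>
      simp only [Fin.snoc_last, Fin.lastCases_last]
      exact hha.hasFDerivAt
    | cast q =>
      simp only [Fin.snoc_castSucc, Fin.lastCases_castSucc]
      exact hasFDerivAt_apply q b'
  have hψb : (Fin.snoc b' (h a b') : Fin (m+1) → ℝ) = b := by
    rw [hhb, hb']
    exact Fin.snoc_init_self b
  have hDψv : ∀ k : Fin m, Dψ (Pi.single k 1)
      = (Pi.single k.castSucc 1 : Fin (m+1) → ℝ)
        + d k • (Pi.single (Fin.last m) 1 : Fin (m+1) → ℝ) := by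
    intro k
    funext j
    induction j using Fin.lastCases with
    | last =>
      simp [hDψ, Pi.single_apply, (Fin.castSucc_lt_last k).ne']; rfl
    | cast q =>
      simp only [hDψ, ContinuousLinearMap.pi_apply, Fin.lastCases_castSucc,
        ContinuousLinearMap.proj_apply, Pi.add_apply, Pi.smul_apply]
      rw [Pi.single_apply, Pi.single_apply, Pi.single_apply]
      simp [Fin.castSucc_inj, (Fin.castSucc_lt_last q).ne, eq_comm]
  have key : ∀ i' : Fin (m+1), ∀ k : Fin m,
      fderiv ℝ (fun y' : Fin m → ℝ => f a (Fin.snoc y' (h a y')) i') b' (Pi.single k 1)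
        = J i' k.castSucc + d k * J i' (Fin.last m) := by
    intro i' k
    have hcmp : HasFDerivAt (fun y' : Fin m → ℝ => f a (Fin.snoc y' (h a y')) i')
        ((fderiv ℝ (fun y => f a y i') b).comp Dψ) b' := by
      have hg : HasFDerivAt (fun y => f a y i') (fderiv ℝ (fun y => f a y i') b)
          (Fin.snoc b' (h a b') : Fin (m+1) → ℝ) := by
        rw [hψb]; exact (hfac i').hasFDerivAt
      exact hg.comp b' hψ
    rw [hcmp.fderiv]
    simp only [ContinuousLinearMap.comp_apply, hDψv k, map_add, map_smul]
    rw [hJ i' k.castSucc, hJ i' (Fin.last m)]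
    simp [smul_eq_mul]
  -- the constraint: f_i(a, snoc y' (h a y')) = 0 near b'
  have hev : ∀ᶠ y' in nhds b', f a (Fin.snoc y' (h a y')) i = 0 := by
    have hT : Filter.Tendsto (fun y' : Fin m → ℝ => ((a : Fin n → ℝ), y'))
        (nhds b') (nhds (a, b')) :=
      ((continuous_const.prodMk continuous_id).tendsto b').mono_right (le_of_eq rfl)
    exact hT.eventually hfh
  have h0 : fderiv ℝ (fun y' : Fin m → ℝ => f a (Fin.snoc y' (h a y')) i) b' = 0 := by
    have heq : (fun y' : Fin m → ℝ => f a (Fin.snoc y' (h a y')) i)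
        =ᶠ[nhds b'] (fun _ => (0:ℝ)) := hev
    rw [heq.fderiv_eq, fderiv_fun_const]
    rfl
  have hdk : ∀ k : Fin m, d k = -(J i k.castSucc / J i (Fin.last m)) := by
    intro k
    have := key i k
    rw [h0] at this
    simp only [ContinuousLinearMap.zero_apply] at this
    field_simp
    linarith
  -- entries of J1
  have hJ1' : ∀ j k, J1 j k = J (i.succAbove j) k.castSucc
      - J (i.succAbove j) (Fin.last m) * (J i k.castSucc / J i (Fin.last m)) := by
    intro j k
    rw [hJ1 j k, key (i.succAbove j) k, hdk k]
    ring
  have hla := statement11_la m J i hi J1 hJ1'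
  have hsq : (-1 : ℝ)^((i:ℕ)+m) * (-1 : ℝ)^((i:ℕ)+m) = 1 := by
    rw [← pow_add]
    exact Even.neg_one_pow ⟨(i:ℕ)+m, by ring⟩
  constructor
  · rw [hla, div_mul_eq_mul_div, eq_div_iff hi,
      show (-1:ℝ)^((i:ℕ)+m) * ((-1:ℝ)^((i:ℕ)+m) * J i (Fin.last m) * J1.det)
        = ((-1:ℝ)^((i:ℕ)+m) * (-1:ℝ)^((i:ℕ)+m)) * (J i (Fin.last m) * J1.det) from by ring,
      hsq, one_mul, mul_comm]
  · intro hJd hJ1d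
    apply hJd
    rw [hla, hJ1d, mul_zero]
end

section
/- Suppose that each h_i is continuous and that for every i = m, m−1, …, 1 and every (x, y₁,…,y_{i−1}) ∈ R × I₁×⋯×I_{i−1}, the value h_i(x, y₁,…,y_{i−1}) is the unique z ∈ I_i such that f_i(x, y₁,…,y_{i−1}, z, z_{i+1}, …, z_m) = 0, where z_{i+1},…,z_m are obtained from the recursion z_j = h_j(x, y₁,…,y_{i−1}, z, z_{i+1},…,z_{j−1}) for j = i+1,…,m. Define g : R → I = I₁×⋯×I_m by g₁(x) = h₁(x), g₂(x) = h₂(x, g₁(x)), …, g_m(x) = h_m(x, g₁(x),…,g_{m−1}(x)). Then g is continuous, f(x, g(x)) = 0 for every x ∈ R, and g is the unique function from R to I satisfying f(x, g(x)) = 0 for every x ∈ R. -/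
open Set

/-- Starting from the vector `y`, successively overwrite the coordinates
`i, i+1, …` (as long as fuel remains and the index is `< m`) by the values prescribed
by the family of functions `h`; `fillAux h x (m - i) i y` is the vector
`(y₁, …, y_{i-1}, z_i, …, z_m)` with `z_j = h_j (x, y₁, …, y_{i-1}, z_i, …, z_{j-1})`
(each `h j` is assumed to depend only on the coordinates before `j`). -/
def fillAux {n m : ℕ} (h : Fin m → (Fin n → ℝ) → (Fin m → ℝ) → ℝ) (x : Fin n → ℝ) :
    ℕ → ℕ → (Fin m → ℝ) → Fin m → ℝ
  | 0, _, y => y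
  | fuel + 1, i, y =>
    if hi : i < m then
      fillAux h x fuel (i + 1) (Function.update y ⟨i, hi⟩ (h ⟨i, hi⟩ x y))
    else y

lemma fillAux_lt {n m : ℕ} (h : Fin m → (Fin n → ℝ) → (Fin m → ℝ) → ℝ) (x : Fin n → ℝ) :
    ∀ (fuel i : ℕ) (y : Fin m → ℝ) (j : Fin m), (j : ℕ) < i →
      fillAux h x fuel i y j = y j := by
  intro fuel
  induction fuel with
  | zero => intro i y j _; rfl
  | succ fuel ih =>
    intro i y j hj
    simp only [fillAux]
    split
    · rw [ih (i + 1) _ j (by omega), Function.update_apply, if_neg (by simp [Fin.ext_iff]; omega)]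
    · rfl

lemma fillAux_fixed {n m : ℕ} (h : Fin m → (Fin n → ℝ) → (Fin m → ℝ) → ℝ) (x : Fin n → ℝ) :
    ∀ (fuel i : ℕ) (y : Fin m → ℝ), (∀ j : Fin m, i ≤ (j : ℕ) → y j = h j x y) →
      fillAux h x fuel i y = y := by
  intro fuel
  induction fuel with
  | zero => intro i y _; rfl
  | succ fuel ih =>
    intro i y hy
    simp only [fillAux]
    split
    · next him =>
      rw [show h ⟨i, him⟩ x y = y ⟨i, him⟩ from (hy ⟨i, him⟩ le_rfl).symm,
        Function.update_eq_self]
      exact ih (i + 1) y (fun j hj => hy j (by omega))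
    · rfl

lemma fillAux_spec {n m : ℕ} (h : Fin m → (Fin n → ℝ) → (Fin m → ℝ) → ℝ)
    (hdep : ∀ (i : Fin m) (x : Fin n → ℝ) (y y' : Fin m → ℝ),
      (∀ j : Fin m, (j : ℕ) < (i : ℕ) → y j = y' j) → h i x y = h i x y')
    (x : Fin n → ℝ) :
    ∀ (fuel i : ℕ) (y : Fin m → ℝ), m ≤ i + fuel →
      ∀ j : Fin m, i ≤ (j : ℕ) →
        fillAux h x fuel i y j = h j x (fillAux h x fuel i y) := by
  intro fuel
  induction fuel with
  | zero => intro i y hm j hij; exact absurd j.isLt (by omega)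
  | succ fuel ih =>
    intro i y hm j hij
    have him : i < m := lt_of_le_of_lt hij j.isLt
    simp only [fillAux, dif_pos him]
    set y' := Function.update y ⟨i, him⟩ (h ⟨i, him⟩ x y) with hy'
    by_cases hji : i + 1 ≤ (j : ℕ)
    · exact ih (i + 1) y' (by omega) j hji
    · have hj1 : (j : ℕ) < i + 1 := by omega
      have hje : j = ⟨i, him⟩ := Fin.ext (show (j : ℕ) = i by omega)
      have h1 : fillAux h x fuel (i + 1) y' j = h ⟨i, him⟩ x y := by
        rw [fillAux_lt h x fuel (i + 1) y' j hj1, hje, hy', Function.update_self]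
      rw [h1, hje]
      apply hdep
      intro k hk
      rw [fillAux_lt h x fuel (i + 1) y' k (by omega), hy', Function.update_apply,
        if_neg (by simp [Fin.ext_iff]; omega)]

/-- If each `h i` is continuous and, for every `i` and every
`(x, y₁,…,y_{i−1}) ∈ R × I₁×⋯×I_{i−1}`, the value `h i (x, y₁,…,y_{i−1})` is the unique
`z ∈ I_i` with `f_i(x, y₁,…,y_{i−1}, z, z_{i+1},…,z_m) = 0` (the later `z_j` obtained by
the recursion), then `g` defined by `g₁ = h₁(x)`, `g₂ = h₂(x, g₁)`, …,
`g_m = h_m(x, g₁,…,g_{m−1})` is continuous, satisfies `f(x, g x) = 0` on `R`, and is the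
unique function from `R` to `I` doing so. -/
theorem statement12 (n m : ℕ) (ξ η : Fin n → ℝ) (hξη : ∀ k, ξ k ≤ η k)
    (lo hi : Fin m → ℝ) (hI : ∀ i, lo i ≤ hi i)
    (f : (Fin n → ℝ) → (Fin m → ℝ) → Fin m → ℝ)
    (hf : Continuous fun p : (Fin n → ℝ) × (Fin m → ℝ) => f p.1 p.2)
    (h : Fin m → (Fin n → ℝ) → (Fin m → ℝ) → ℝ)
    (hdep : ∀ (i : Fin m) (x : Fin n → ℝ) (y y' : Fin m → ℝ),
      (∀ j : Fin m, (j : ℕ) < (i : ℕ) → y j = y' j) → h i x y = h i x y')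
    (hcont : ∀ i : Fin m,
      ContinuousOn (fun p : (Fin n → ℝ) × (Fin m → ℝ) => h i p.1 p.2) (Icc ξ η ×ˢ Icc lo hi))
    (huniq : ∀ i : Fin m, ∀ x ∈ Icc ξ η, ∀ y : Fin m → ℝ,
      (∀ j : Fin m, (j : ℕ) < (i : ℕ) → y j ∈ Icc (lo j) (hi j)) →
      h i x y ∈ Icc (lo i) (hi i) ∧
        ∀ z ∈ Icc (lo i) (hi i),
          (f x (fillAux h x (m - ((i : ℕ) + 1)) ((i : ℕ) + 1) (Function.update y i z)) i = 0 ↔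
            z = h i x y)) :
    ContinuousOn (fun x => fillAux h x m 0 fun _ => 0) (Icc ξ η) ∧
    (∀ x ∈ Icc ξ η,
      (fillAux h x m 0 fun _ => 0) ∈ Icc lo hi ∧ f x (fillAux h x m 0 fun _ => 0) = 0) ∧
    ∀ g' : (Fin n → ℝ) → Fin m → ℝ,
      (∀ x ∈ Icc ξ η, g' x ∈ Icc lo hi ∧ f x (g' x) = 0) →
      ∀ x ∈ Icc ξ η, g' x = fillAux h x m 0 fun _ => 0 := by

  set F : (Fin n → ℝ) → Fin m → ℝ := fun x => fillAux h x m 0 fun _ => 0 with hF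
  have hFspec : ∀ x, ∀ j : Fin m, F x j = h j x (F x) := fun x j =>
    fillAux_spec h hdep x m 0 _ (by omega) j (Nat.zero_le _)
  -- membership
  have hFmem : ∀ x ∈ Icc ξ η, ∀ j : Fin m, F x j ∈ Icc (lo j) (hi j) := by
    intro x hx
    have key : ∀ N (j : Fin m), (j : ℕ) < N → F x j ∈ Icc (lo j) (hi j) := by
      intro N
      induction N with
      | zero => intro j hj; omega
      | succ N ih =>
        intro j hj
        by_cases hjN : (j : ℕ) < N
        · exact ih j hjN
        · rw [hFspec x j]
          exact (huniq j x hx (F x) (fun k hk => ih k (by omega))).1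
    exact fun j => key m j j.isLt
  -- f vanishes
  have hFzero : ∀ x ∈ Icc ξ η, f x (F x) = 0 := by
    intro x hx
    funext j
    show f x (F x) j = 0
    have hu := (huniq j x hx (F x) (fun k _ => hFmem x hx k)).2 (F x j) (hFmem x hx j)
    have heq : fillAux h x (m - ((j : ℕ) + 1)) ((j : ℕ) + 1)
        (Function.update (F x) j (F x j)) = F x := by
      rw [Function.update_eq_self]
      exact fillAux_fixed h x _ _ _ (fun k _ => hFspec x k)
    rw [heq] at hu
    exact hu.mpr (hFspec x j)
  refine ⟨?_, fun x hx => ⟨⟨fun k => (hFmem x hx k).1, fun k => (hFmem x hx k).2⟩,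
      hFzero x hx⟩, ?_⟩
  · -- continuity
    apply continuousOn_pi.2
    have key : ∀ N (j : Fin m), (j : ℕ) < N →
        ContinuousOn (fun x => F x j) (Icc ξ η) := by
      intro N
      induction N with
      | zero => intro j hj; omega
      | succ N ih =>
        intro j hj
        by_cases hjN : (j : ℕ) < N
        · exact ih j hjN
        · set w : (Fin n → ℝ) → Fin m → ℝ :=
            fun x k => if (k : ℕ) < (j : ℕ) then F x k else lo k with hw
          have hwcont : ContinuousOn w (Icc ξ η) := by
            apply continuousOn_pi.2
            intro k
            by_cases hk : (k : ℕ) < (j : ℕ)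
            · simp only [hw, if_pos hk]; exact ih k (by omega)
            · simp only [hw, if_neg hk]; exact continuousOn_const
          have hwmem : ∀ x ∈ Icc ξ η, w x ∈ Icc lo hi := by
            intro x hx
            refine ⟨fun k => ?_, fun k => ?_⟩ <;> by_cases hk : (k : ℕ) < (j : ℕ)
            · simpa only [hw, if_pos hk] using (hFmem x hx k).1
            · simpa only [hw, if_neg hk] using le_refl (lo k)
            · simpa only [hw, if_pos hk] using (hFmem x hx k).2
            · simpa only [hw, if_neg hk] using hI k
          have heq : ∀ x ∈ Icc ξ η, F x j = h j x (w x) := by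
            intro x hx
            rw [hFspec x j]
            exact hdep j x (F x) (w x) (fun k hk => by simp only [hw, if_pos hk])
          exact ContinuousOn.congr
            ((hcont j).comp (f := fun x => (x, w x)) (ContinuousOn.prodMk continuousOn_id hwcont) (fun x hx => ⟨hx, hwmem x hx⟩)) heq
    exact fun j => key m j j.isLt
  · -- uniqueness
    intro g' hg' x hx
    have hy := hg' x hx
    set y := g' x with hyd
    have hyc : ∀ k, y k ∈ Icc (lo k) (hi k) := fun k => ⟨hy.1.1 k, hy.1.2 k⟩
    have hyfix : ∀ j : Fin m, y j = h j x y := by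
      have key : ∀ d (i : ℕ), m ≤ i + d → ∀ j : Fin m, i ≤ (j : ℕ) → y j = h j x y := by
        intro d
        induction d with
        | zero => intro i him j hij; exact absurd j.isLt (by omega)
        | succ d ih =>
          intro i him j hij
          by_cases hji : i + 1 ≤ (j : ℕ)
          · exact ih (i + 1) (by omega) j hji
          · have hu := (huniq j x hx y (fun k _ => hyc k)).2 (y j) (hyc j)
            have heq : fillAux h x (m - ((j : ℕ) + 1)) ((j : ℕ) + 1)
                (Function.update y j (y j)) = y := by
              rw [Function.update_eq_self]
              exact fillAux_fixed h x _ _ _ (fun k hk => ih (i + 1) (by omega) k (by omega))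
            rw [heq] at hu
            exact hu.mp (by rw [hy.2]; rfl)
      exact fun j => key m 0 (by omega) j (Nat.zero_le _)
    have key2 : ∀ N (j : Fin m), (j : ℕ) < N → y j = F x j := by
      intro N
      induction N with
      | zero => intro j hj; omega
      | succ N ih =>
        intro j hj
        rw [hyfix j, hFspec x j]
        exact hdep j x y (F x) (fun k hk => ih k (by omega))
    funext j
    exact key2 m j j.isLt
end
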